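/- arXiv:1403.6307 — 9 statements merged into one kernel-verified Lean document; each statement's English description precedes it below -/
import Mathlib

section
/- If d is a finite sequence of positive integers of length n with maximum element a and minimum element b, and nb ≥ (a+b)²/4, then d is bipartite graphic (i.e., there exists a simple bipartite graph whose two parts each have d as their list of vertex degrees). -/
/-- A finite sequence `d` of length `n` is *bipartite graphic* if there is a simple
bipartite graph (given by its biadjacency matrix) whose two parts each have `d` as
their list of vertex degrees (the second part's degrees being a permutation of `d`). -/
def BipartiteGraphic {n : ℕ} (d : Fin n → ℕ) : Prop :=
  ∃ M : Fin n → Fin n → Bool, ∃ e : Equiv.Perm (Fin n),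
    (∀ i, (∑ j, if M i j then 1 else 0) = d i) ∧
    (∀ j, (∑ i, if M i j then 1 else 0) = d (e j))


lemma amgm4 (x y : ℕ) : 4 * (x * y) ≤ (x + y) ^ 2 := by
  rcases Nat.le_total x y with h | h
  · obtain ⟨t, rfl⟩ := Nat.exists_eq_add_of_le h
    nlinarith [sq_nonneg t]
  · obtain ⟨t, rfl⟩ := Nat.exists_eq_add_of_le h
    nlinarith [sq_nonneg t]


lemma exists_top {n : ℕ} (c : Fin n → ℕ) (k : ℕ) (hk : k ≤ n) :
    ∃ T : Finset (Fin n), T.card = k ∧ ∀ j ∈ T, ∀ j' ∉ T, c j' ≤ c j := by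
  induction k with
  | zero => exact ⟨∅, rfl, by simp⟩
  | succ k ih =>
    obtain ⟨T, hTcard, hTtop⟩ := ih (Nat.le_of_succ_le hk)
    have hne : (Tᶜ : Finset (Fin n)).Nonempty := by
      rw [← Finset.card_pos, Finset.card_compl, hTcard]
      simp only [Fintype.card_fin]
      omega
    obtain ⟨j0, hj0, hj0max⟩ := Finset.exists_max_image Tᶜ c hne
    have hj0T : j0 ∉ T := by simpa using hj0
    refine ⟨insert j0 T, ?_, ?_⟩
    · rw [Finset.card_insert_of_notMem hj0T, hTcard]
    · intro j hj j' hj'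
      have hj'T : j' ∉ T := fun hm => hj' (Finset.mem_insert_of_mem hm)
      rcases Finset.mem_insert.mp hj with rfl | hjT
      · exact hj0max j' (by simpa using hj'T)
      · exact hTtop j hjT j' hj'T

lemma exists_bool_matrix {n : ℕ} (N : ℕ) : ∀ (r c : Fin n → ℕ),
    (∑ i, r i) ≤ N → (∑ i, r i) = (∑ j, c j) →
    (∀ A : Finset (Fin n), ∑ i ∈ A, r i ≤ ∑ j, min (c j) A.card) →
    ∃ M : Fin n → Fin n → Bool,
      (∀ i, (∑ j, if M i j then 1 else 0) = r i) ∧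
      (∀ j, (∑ i, if M i j then 1 else 0) = c j) := by
  induction N with
  | zero =>
    intro r c hle hsum _
    have hr : ∀ i, r i = 0 := by
      intro i
      have := Finset.sum_eq_zero_iff.mp (Nat.le_zero.mp hle) i (Finset.mem_univ i)
      exact this
    have hc : ∀ j, c j = 0 := by
      intro j
      have h0 : (∑ j, c j) = 0 := by omega
      exact Finset.sum_eq_zero_iff.mp h0 j (Finset.mem_univ j)
    exact ⟨fun _ _ => false, fun i => by simp [hr i], fun j => by simp [hc j]⟩
  | succ N ih =>
    intro r c hle hsum hC
    by_cases hz : ∀ i, r i = 0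
    · have hc : ∀ j, c j = 0 := by
        intro j
        have h0 : (∑ j, c j) = 0 := by
          rw [← hsum]; exact Finset.sum_eq_zero fun i _ => hz i
        exact Finset.sum_eq_zero_iff.mp h0 j (Finset.mem_univ j)
      exact ⟨fun _ _ => false, fun i => by simp [hz i], fun j => by simp [hc j]⟩
    · push_neg at hz
      obtain ⟨iw, hiw⟩ := hz
      obtain ⟨i0, -, hi0max⟩ := Finset.exists_max_image Finset.univ r ⟨iw, Finset.mem_univ iw⟩
      set k := r i0 with hk
      have hk1 : 1 ≤ k := by
        have := hi0max iw (Finset.mem_univ iw); omega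
      -- k ≤ number of columns with c ≥ 1
      have hsupp : k ≤ (Finset.univ.filter (fun j => 1 ≤ c j)).card := by
        have h1 := hC {i0}
        simp only [Finset.sum_singleton, Finset.card_singleton] at h1
        have h2 : (∑ j, min (c j) 1) = (Finset.univ.filter (fun j => 1 ≤ c j)).card := by
          rw [Finset.card_filter]
          apply Finset.sum_congr rfl
          intro j _
          by_cases hj : 1 ≤ c j <;> simp [hj] <;> omega
        omega
      have hkn : k ≤ n := by
        calc k ≤ (Finset.univ.filter (fun j => 1 ≤ c j)).card := hsupp
        _ ≤ (Finset.univ : Finset (Fin n)).card := Finset.card_filter_le _ _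
        _ = n := by simp
      obtain ⟨T, hTcard, hTtop⟩ := exists_top c k hkn
      -- every column in T has c ≥ 1
      have hT1 : ∀ j ∈ T, 1 ≤ c j := by
        intro j hj
        by_contra hcj
        have hsub : (Finset.univ.filter (fun j => 1 ≤ c j)) ⊆ T.erase j := by
          intro j' hj'
          have hcj' : 1 ≤ c j' := (Finset.mem_filter.mp hj').2
          have hj'T : j' ∈ T := by
            by_contra hno
            have := hTtop j hj j' hno
            omega
          refine Finset.mem_erase.mpr ⟨?_, hj'T⟩
          intro hEq; subst hEq; omega
        have := Finset.card_le_card hsub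
        rw [Finset.card_erase_of_mem hj, hTcard] at this
        omega
      set r' : Fin n → ℕ := Function.update r i0 0 with hr'
      set c' : Fin n → ℕ := fun j => if j ∈ T then c j - 1 else c j with hc'
      have hr'i0 : r' i0 = 0 := by simp [hr']
      have hr'ne : ∀ i, i ≠ i0 → r' i = r i := by
        intro i hi; simp [hr', Function.update_of_ne hi]
      -- sum facts
      have hsumr' : (∑ i, r i) = (∑ i, r' i) + k := by
        have h1 : (∑ i, r i) = r i0 + ∑ i ∈ Finset.univ.erase i0, r i :=
          (Finset.add_sum_erase _ _ (Finset.mem_univ i0)).symm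
        have h2 : (∑ i, r' i) = r' i0 + ∑ i ∈ Finset.univ.erase i0, r' i :=
          (Finset.add_sum_erase _ _ (Finset.mem_univ i0)).symm
        have h3 : ∑ i ∈ Finset.univ.erase i0, r' i = ∑ i ∈ Finset.univ.erase i0, r i :=
          Finset.sum_congr rfl fun i hi => hr'ne i (Finset.mem_erase.mp hi).1
        rw [h1, h2, h3, hr'i0]; omega
      have hsumc' : (∑ j, c j) = (∑ j, c' j) + k := by
        have h1 : ∀ j, c j = c' j + (if j ∈ T then 1 else 0) := by
          intro j
          by_cases hj : j ∈ T
          · have := hT1 j hj; simp [hc', hj]; omega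
          · simp [hc', hj]
        calc (∑ j, c j) = ∑ j, (c' j + (if j ∈ T then 1 else 0)) :=
              Finset.sum_congr rfl fun j _ => h1 j
        _ = (∑ j, c' j) + ∑ j, (if j ∈ T then 1 else 0) := Finset.sum_add_distrib
        _ = (∑ j, c' j) + k := by
              rw [Finset.sum_ite_mem, Finset.univ_inter, Finset.sum_const, hTcard]
              simp
      -- the key condition for r', c'
      have hkey : ∀ A : Finset (Fin n), i0 ∉ A → ∑ i ∈ A, r' i ≤ ∑ j, min (c' j) A.card := by
        intro A hA
        set p := A.card with hp
        have hrA : ∑ i ∈ A, r' i = ∑ i ∈ A, r i :=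
          Finset.sum_congr rfl fun i hi => hr'ne i (fun hEq => hA (hEq ▸ hi))
        set t := ∑ j, (if j ∈ T ∧ c j ≤ p then 1 else 0) with ht
        have hPt : (∑ j, min (c j) p) = (∑ j, min (c' j) p) + t := by
          rw [ht, ← Finset.sum_add_distrib]
          apply Finset.sum_congr rfl
          intro j _
          by_cases hj : j ∈ T
          · have := hT1 j hj
            by_cases hcp : c j ≤ p <;> simp [hc', hj, hcp] <;> omega
          · simp [hc', hj]
        by_cases htz : t = 0
        · rw [hrA]
          calc ∑ i ∈ A, r i ≤ ∑ j, min (c j) p := hC A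
          _ = ∑ j, min (c' j) p := by omega
        · -- t ≥ 1 : there is j1 ∈ T with c j1 ≤ p
          have hj1 : ∃ j1 ∈ T, c j1 ≤ p := by
            by_contra hno
            push_neg at hno
            apply htz
            rw [ht]
            apply Finset.sum_eq_zero
            intro j _
            have : ¬ (j ∈ T ∧ c j ≤ p) := fun ⟨h1, h2⟩ => absurd h2 (by
              have := hno j h1; omega)
            simp [this]
          obtain ⟨j1, hj1T, hj1p⟩ := hj1
          set Q := ∑ j, (if p + 1 ≤ c j then 1 else 0) with hQ
          have hPQ : (∑ j, min (c j) (p + 1)) = (∑ j, min (c j) p) + Q := by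
            rw [hQ, ← Finset.sum_add_distrib]
            apply Finset.sum_congr rfl
            intro j _
            by_cases hcp : p + 1 ≤ c j <;> simp [hcp] <;> omega
          have hindT : (∑ j, (if j ∈ T then 1 else 0)) = k := by
            rw [Finset.sum_ite_mem, Finset.univ_inter, Finset.sum_const, hTcard]; simp
          have hQt : Q + t = k := by
            rw [hQ, ht, ← Finset.sum_add_distrib, ← hindT]
            apply Finset.sum_congr rfl
            intro j _
            by_cases hj : j ∈ T
            · by_cases hcp : p + 1 ≤ c j <;> simp [hj, hcp] <;> omega
            · have hle' : c j ≤ c j1 := hTtop j1 hj1T j hj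
              have : ¬ (p + 1 ≤ c j) := by omega
              simp [hj, this]
          have hins := hC (insert i0 A)
          rw [Finset.sum_insert hA, Finset.card_insert_of_notMem hA, ← hp] at hins
          rw [hrA]
          omega
      -- condition for all A
      have hC' : ∀ A : Finset (Fin n), ∑ i ∈ A, r' i ≤ ∑ j, min (c' j) A.card := by
        intro A
        by_cases hA : i0 ∈ A
        · have h1 : ∑ i ∈ A, r' i = ∑ i ∈ A.erase i0, r' i := by
            rw [← Finset.add_sum_erase _ _ hA, hr'i0, zero_add]
          rw [h1]
          calc ∑ i ∈ A.erase i0, r' i ≤ ∑ j, min (c' j) (A.erase i0).card :=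
                hkey _ (Finset.notMem_erase _ _)
          _ ≤ ∑ j, min (c' j) A.card := by
                apply Finset.sum_le_sum
                intro j _
                exact min_le_min (le_refl _) (Finset.card_le_card (Finset.erase_subset _ _))
        · exact hkey A hA
      have hle' : (∑ i, r' i) ≤ N := by omega
      have hsum' : (∑ i, r' i) = (∑ j, c' j) := by omega
      obtain ⟨M', hM'row, hM'col⟩ := ih r' c' hle' hsum' hC'
      have hM'i0 : ∀ j, M' i0 j = false := by
        intro j
        have h0 : (∑ j, if M' i0 j then 1 else 0) = 0 := by rw [hM'row i0, hr'i0]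
        have hz0 := Finset.sum_eq_zero_iff.mp h0 j (Finset.mem_univ j)
        by_cases hb : M' i0 j = true
        · simp [hb] at hz0
        · simpa using hb
      refine ⟨fun i j => if i = i0 then decide (j ∈ T) else M' i j, ?_, ?_⟩
      · intro i
        by_cases hi : i = i0
        · rw [hi]
          simp only [if_pos rfl]
          calc (∑ j, if decide (j ∈ T) = true then 1 else 0)
              = ∑ j, (if j ∈ T then 1 else 0) := by
                apply Finset.sum_congr rfl; intro j _; simp
          _ = k := by
                rw [Finset.sum_ite_mem, Finset.univ_inter, Finset.sum_const, hTcard]; simp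
          _ = r i0 := hk.symm ▸ rfl
        · simp only [if_neg hi]
          rw [hM'row i, hr'ne i hi]
      · intro j
        have hsplit : (∑ i, if (if i = i0 then decide (j ∈ T) else M' i j) then 1 else 0)
            = (if j ∈ T then 1 else 0) + ∑ i ∈ Finset.univ.erase i0, (if M' i j then 1 else 0) := by
          rw [← Finset.add_sum_erase _ _ (Finset.mem_univ i0)]
          congr 1
          · simp
          · apply Finset.sum_congr rfl
            intro i hi
            rw [if_neg (Finset.mem_erase.mp hi).1]
        have hcol : (∑ i, if M' i j then 1 else 0) = c' j := hM'col j
        have hcol2 : (∑ i, if M' i j then 1 else 0)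
            = (if M' i0 j then 1 else 0) + ∑ i ∈ Finset.univ.erase i0, (if M' i j then 1 else 0) :=
          (Finset.add_sum_erase _ _ (Finset.mem_univ i0)).symm
        rw [hM'i0 j] at hcol2
        simp only [if_neg (Bool.false_ne_true)] at hcol2
        rw [hsplit]
        by_cases hj : j ∈ T
        · have := hT1 j hj
          simp only [if_pos hj]
          have : c' j = c j - 1 := by simp [hc', hj]
          omega
        · simp only [if_neg hj]
          have : c' j = c j := by simp [hc', hj]
          omega

theorem stmt_0 (n a b : ℕ) (hn : 0 < n) (d : Fin n → ℕ)
    (hpos : ∀ i, 0 < d i)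
    (hmax : (∀ i, d i ≤ a) ∧ ∃ i, d i = a)
    (hmin : (∀ i, b ≤ d i) ∧ ∃ i, d i = b)
    (h : 4 * n * b ≥ (a + b) ^ 2) :
    BipartiteGraphic d := by
  obtain ⟨hub, imax, himax⟩ := hmax
  obtain ⟨hlb, imin, himin⟩ := hmin
  have hb1 : 1 ≤ b := himin ▸ hpos imin
  have han : a ≤ n := by
    have h1 : 4 * (a * b) ≤ (a + b) ^ 2 := amgm4 a b
    have h3 : a * b ≤ n * b := by nlinarith
    exact Nat.le_of_mul_le_mul_right h3 hb1
  have hC : ∀ A : Finset (Fin n), ∑ i ∈ A, d i ≤ ∑ j, min (d j) A.card := by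
    intro A
    set p := A.card with hp
    have hpn : p ≤ n := by rw [hp]; simpa using Finset.card_le_univ A
    by_cases hpa : a ≤ p
    · calc ∑ i ∈ A, d i = ∑ i ∈ A, min (d i) p := by
            apply Finset.sum_congr rfl
            intro i _
            exact (min_eq_left (le_trans (hub i) hpa)).symm
      _ ≤ ∑ j, min (d j) p := Finset.sum_le_sum_of_subset (Finset.subset_univ A)
    · push_neg at hpa
      have step1 : ∑ i ∈ A, d i ≤ (∑ i ∈ A, min (d i) p) + p * (a - p) := by
        calc ∑ i ∈ A, d i ≤ ∑ i ∈ A, (min (d i) p + (a - p)) := by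
              apply Finset.sum_le_sum
              intro i _
              have h1 := hub i
              rcases le_or_gt (d i) p with hle | hlt
              · rw [min_eq_left hle]; omega
              · rw [min_eq_right (le_of_lt hlt)]; omega
        _ = (∑ i ∈ A, min (d i) p) + p * (a - p) := by
              rw [Finset.sum_add_distrib, Finset.sum_const, ← hp, smul_eq_mul]
      have step2 : (∑ i ∈ A, min (d i) p) + (n - p) * min b p ≤ ∑ j, min (d j) p := by
        have hsplit : (∑ i ∈ Finset.univ \ A, min (d i) p) + (∑ i ∈ A, min (d i) p)
            = ∑ j, min (d j) p := Finset.sum_sdiff (Finset.subset_univ A)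
        have hcard : (Finset.univ \ A).card = n - p := by
          rw [Finset.card_sdiff_of_subset (Finset.subset_univ A), ← hp]
          simp
        have hlow : (n - p) * min b p ≤ ∑ i ∈ Finset.univ \ A, min (d i) p := by
          calc (n - p) * min b p = (Finset.univ \ A).card • min b p := by
                rw [hcard, smul_eq_mul]
          _ ≤ ∑ i ∈ Finset.univ \ A, min (d i) p := by
                apply Finset.card_nsmul_le_sum
                intro i _
                exact min_le_min (hlb i) (le_refl p)
        omega
      have key : p * (a - p) ≤ (n - p) * min b p := by
        by_cases hbp : b ≤ p
        · rw [min_eq_left hbp]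
          have h4 : 4 * (p * (a - p) + p * b) ≤ (a + b) ^ 2 := by
            calc 4 * (p * (a - p) + p * b) = 4 * (p * ((a - p) + b)) := by ring
            _ ≤ (p + ((a - p) + b)) ^ 2 := amgm4 _ _
            _ = (a + b) ^ 2 := by
                  congr 1
                  omega
          have h6 : p * (a - p) + p * b ≤ n * b := by nlinarith
          have h7 : (n - p) * b + p * b = n * b := by
            rw [← Nat.add_mul, Nat.sub_add_cancel hpn]
          linarith
        · push_neg at hbp
          rw [min_eq_right (le_of_lt hbp), mul_comm]
          exact Nat.mul_le_mul (by omega : a - p ≤ n - p) (le_refl p)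
      linarith
  obtain ⟨M, hrow, hcol⟩ := exists_bool_matrix (∑ i, d i) d d le_rfl rfl hC
  exact ⟨M, Equiv.refl _, hrow, fun j => hcol j⟩
end

section
/- Let d be a finite sequence of positive integers of length n with maximum element a and minimum element b. If a ≡ b (mod 2) and nb ≥ (a+b)²/4, or a ≢ b (mod 2) and nb ≥ ⌊(a+b)²/4⌋, then d is bipartite graphic. -/
open Finset

lemma card_filter_val_lt (n k : ℕ) :
    ((univ : Finset (Fin n)).filter fun i : Fin n => (i : ℕ) < k).card = min k n := by
  have himg : ((univ : Finset (Fin n)).filter fun i : Fin n => (i : ℕ) < k).image Fin.val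
      = Finset.range (min k n) := by
    ext x
    simp only [mem_image, mem_filter, mem_univ, true_and, mem_range, lt_min_iff]
    constructor
    · rintro ⟨i, hi, rfl⟩; exact ⟨hi, i.isLt⟩
    · rintro ⟨h1, h2⟩; exact ⟨⟨x, h2⟩, h1, rfl⟩
  calc ((univ : Finset (Fin n)).filter fun i : Fin n => (i : ℕ) < k).card
      = (((univ : Finset (Fin n)).filter fun i : Fin n => (i : ℕ) < k).image Fin.val).card :=
        (Finset.card_image_of_injective _ Fin.val_injective).symm
    _ = min k n := by rw [himg, Finset.card_range]

/-- Gale–Ryser sufficiency, rectangular, by induction on the number of rows. -/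
lemma grmain (m : ℕ) : ∀ (n : ℕ) (r : Fin m → ℕ) (c : Fin n → ℕ),
    Antitone r → (∑ i, r i) = (∑ j, c j) →
    (∀ k : ℕ, (∑ i ∈ univ.filter (fun i : Fin m => (i : ℕ) < k), r i) ≤ ∑ j, min (c j) k) →
    ∃ M : Fin m → Fin n → Bool,
      (∀ i, (∑ j, if M i j then (1:ℕ) else 0) = r i) ∧
      (∀ j, (∑ i, if M i j then (1:ℕ) else 0) = c j) := by
  induction m with
  | zero =>
    intro n r c _ hsum _
    refine ⟨fun _ _ => false, fun i => i.elim0, fun j => ?_⟩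
    have h0 : (∑ j, c j) = 0 := by simpa using hsum.symm
    have := Finset.sum_eq_zero_iff.mp h0 j (mem_univ j)
    simp [this]
  | succ m ih =>
    intro n r c hant hsum hGR
    set t := r 0 with ht
    have hfilter1 : (univ.filter fun i : Fin (m+1) => (i : ℕ) < 1) = {0} := by
      ext i
      simp only [mem_filter, mem_univ, true_and, mem_singleton]
      constructor
      · intro h
        have : (i : ℕ) = 0 := by omega
        exact Fin.ext (by simp [this])
      · rintro rfl; simp
    have hGR1 : t ≤ ∑ j, min (c j) 1 := by
      have := hGR 1
      rwa [hfilter1, Finset.sum_singleton] at this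
    have htn : t ≤ n := by
      refine hGR1.trans ?_
      calc (∑ j, min (c j) 1) ≤ ∑ _j : Fin n, 1 :=
            Finset.sum_le_sum fun j _ => min_le_right _ _
        _ = n := by simp
    set π := Tuple.sort c with hπ
    have hmono : Monotone (c ∘ π) := Tuple.monotone_sort c
    set D : Finset (Fin n) := (univ.filter fun i : Fin n => n - t ≤ (i : ℕ)).image π with hD
    have hcardD : D.card = t := by
      rw [hD, Finset.card_image_of_injective _ π.injective]
      have h1 : ((univ : Finset (Fin n)).filter fun i : Fin n => n - t ≤ (i : ℕ)).card
          + ((univ : Finset (Fin n)).filter fun i : Fin n => (i : ℕ) < n - t).card = n := by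
        have h2 := Finset.card_filter_add_card_filter_not
          (s := (univ : Finset (Fin n))) (p := fun i : Fin n => (i : ℕ) < n - t)
        simp only [Finset.card_univ, Fintype.card_fin] at h2
        have h3 : ((univ : Finset (Fin n)).filter fun i : Fin n => ¬ (i : ℕ) < n - t)
            = (univ : Finset (Fin n)).filter fun i : Fin n => n - t ≤ (i : ℕ) := by
          ext i
          simp only [mem_filter, mem_univ, true_and]
          omega
        rw [h3] at h2
        omega
      have h4 := card_filter_val_lt n (n - t)
      omega
    have hup : ∀ j ∈ D, ∀ j' ∉ D, c j' ≤ c j := by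
      intro j hj j' hj'
      rw [hD, Finset.mem_image] at hj
      obtain ⟨i, hi, rfl⟩ := hj
      simp only [mem_filter, mem_univ, true_and] at hi
      have hi' : ¬ (n - t ≤ ((π.symm j' : Fin n) : ℕ)) := by
        intro hc
        refine hj' ?_
        rw [hD, Finset.mem_image]
        exact ⟨π.symm j', by simpa using hc, by simp⟩
      have hle : (π.symm j' : Fin n) ≤ i := Fin.le_def.mpr (by omega)
      have := hmono hle
      simpa using this
    have hposD : ∀ j ∈ D, 1 ≤ c j := by
      by_contra hcon
      push_neg at hcon
      obtain ⟨j0, hj0D, hj0⟩ := hcon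
      have hsub : (univ.filter fun j => 1 ≤ c j) ⊆ D.erase j0 := by
        intro j hj
        simp only [mem_filter, mem_univ, true_and] at hj
        have hjD : j ∈ D := by
          by_contra hnd
          have := hup j0 hj0D j hnd
          omega
        refine Finset.mem_erase.mpr ⟨?_, hjD⟩
        rintro rfl; omega
      have h1 : t ≤ (univ.filter fun j => 1 ≤ c j).card := by
        refine hGR1.trans ?_
        rw [← Finset.sum_filter_add_sum_filter_not univ (fun j => 1 ≤ c j)]
        have h2 : ∑ j ∈ univ.filter (fun j => ¬ 1 ≤ c j), min (c j) 1 = 0 := by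
          refine Finset.sum_eq_zero fun j hj => ?_
          simp only [mem_filter] at hj
          omega
        have h3 : ∑ j ∈ univ.filter (fun j => 1 ≤ c j), min (c j) 1
            ≤ (univ.filter fun j => 1 ≤ c j).card := by
          calc _ ≤ ∑ _j ∈ univ.filter (fun j => 1 ≤ c j), 1 :=
                Finset.sum_le_sum fun j _ => min_le_right _ _
            _ = _ := by simp
        omega
      have h5 := Finset.card_le_card hsub
      rw [Finset.card_erase_of_mem hj0D, hcardD] at h5
      have h6 : 1 ≤ t := by
        rw [← hcardD]
        exact Finset.card_pos.mpr ⟨j0, hj0D⟩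
      omega
    set r' : Fin m → ℕ := fun i => r i.succ with hr'
    set c' : Fin n → ℕ := fun j => c j - (if j ∈ D then 1 else 0) with hc'
    have hc'add : ∀ j, c' j + (if j ∈ D then 1 else 0) = c j := by
      intro j
      by_cases hj : j ∈ D
      · have := hposD j hj
        simp only [hc', hj, if_true]
        omega
      · simp [hc', hj]
    have hant' : Antitone r' := fun i1 i2 h12 => hant (Fin.succ_le_succ_iff.mpr h12)
    have hsumD : (∑ j, (if j ∈ D then (1:ℕ) else 0)) = t := by
      rw [Finset.sum_ite_mem, Finset.univ_inter, ← Finset.card_eq_sum_ones, hcardD]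
    have hsum' : (∑ i, r' i) = ∑ j, c' j := by
      have h1 : (∑ i : Fin (m+1), r i) = t + ∑ i : Fin m, r' i := by
        rw [Fin.sum_univ_succ]
      have h2 : (∑ j, c j) = (∑ j, c' j) + t := by
        calc (∑ j, c j) = ∑ j, (c' j + (if j ∈ D then 1 else 0)) :=
              Finset.sum_congr rfl fun j _ => (hc'add j).symm
          _ = (∑ j, c' j) + ∑ j, (if j ∈ D then (1:ℕ) else 0) := Finset.sum_add_distrib
          _ = (∑ j, c' j) + t := by rw [hsumD]
      omega
    have hcbound : ∀ j, c j ≤ m + 1 := by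
      have hfe : (univ.filter fun i : Fin (m+1) => (i : ℕ) < m + 1) = univ :=
        Finset.filter_true_of_mem fun i _ => i.isLt
      have hGRm := hGR (m+1)
      rw [hfe, hsum] at hGRm
      intro j
      by_contra hc
      push_neg at hc
      have hlt : min (c j) (m+1) < c j := by omega
      have : (∑ j, min (c j) (m+1)) < ∑ j, c j :=
        Finset.sum_lt_sum (fun i _ => min_le_left _ _) ⟨j, mem_univ j, hlt⟩
      omega
    have hGR' : ∀ k : ℕ, (∑ i ∈ univ.filter (fun i : Fin m => (i : ℕ) < k), r' i)
        ≤ ∑ j, min (c' j) k := by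
      intro k
      have hL : (∑ i ∈ univ.filter (fun i : Fin (m+1) => (i : ℕ) < k+1), r i)
          = t + ∑ i ∈ univ.filter (fun i : Fin m => (i : ℕ) < k), r' i := by
        rw [Finset.sum_filter, Finset.sum_filter, Fin.sum_univ_succ]
        simp only [Fin.val_zero, Fin.val_succ]
        congr 1
        · refine Finset.sum_congr rfl fun i _ => ?_
          exact if_congr (by omega) rfl rfl
      set u := (D.filter fun j => c j ≤ k).card with hu
      have hu2 : (∑ j, (if j ∈ D ∧ c j ≤ k then (1:ℕ) else 0)) = u := by
        rw [Finset.sum_ite, Finset.sum_const, Finset.sum_const]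
        simp only [smul_eq_mul, mul_one, mul_zero, add_zero]
        rw [hu]
        congr 1
        ext j
        simp only [mem_filter, mem_univ, true_and]
      have hR : (∑ j, min (c' j) k) + u = ∑ j, min (c j) k := by
        have hpt : ∀ j, min (c' j) k + (if j ∈ D ∧ c j ≤ k then 1 else 0) = min (c j) k := by
          intro j
          by_cases hj : j ∈ D
          · have h1 := hposD j hj
            by_cases hk : c j ≤ k <;> simp only [hc', hj, hk, and_true, and_false,
              if_true, if_false] <;> omega
          · simp [hc', hj]
        calc (∑ j, min (c' j) k) + u
            = (∑ j, min (c' j) k) + ∑ j, (if j ∈ D ∧ c j ≤ k then (1:ℕ) else 0) := by rw [hu2]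
          _ = ∑ j, (min (c' j) k + if j ∈ D ∧ c j ≤ k then 1 else 0) :=
              Finset.sum_add_distrib.symm
          _ = ∑ j, min (c j) k := Finset.sum_congr rfl fun j _ => hpt j
      have hut : u ≤ t := by
        rw [hu, ← hcardD]; exact Finset.card_le_card (Finset.filter_subset _ _)
      rcases Nat.eq_zero_or_pos u with hu0 | hupos
      · rcases Nat.lt_or_ge k (m+1) with hk | hk
        · have hins : (univ.filter fun i : Fin (m+1) => (i : ℕ) < k+1)
              = insert ⟨k, hk⟩ (univ.filter fun i : Fin (m+1) => (i : ℕ) < k) := by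
            ext i
            simp only [mem_filter, mem_univ, true_and, mem_insert]
            constructor
            · intro h
              rcases Nat.lt_or_ge (i : ℕ) k with h2 | h2
              · exact Or.inr h2
              · exact Or.inl (Fin.ext (show (i : ℕ) = k by omega))
            · rintro (rfl | h)
              · simp
              · omega
          have hnotmem : (⟨k, hk⟩ : Fin (m+1)) ∉ (univ.filter fun i : Fin (m+1) => (i : ℕ) < k) := by
            simp
          have hLk : (∑ i ∈ univ.filter (fun i : Fin (m+1) => (i : ℕ) < k+1), r i)
              = r ⟨k, hk⟩ + ∑ i ∈ univ.filter (fun i : Fin (m+1) => (i : ℕ) < k), r i := by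
            rw [hins, Finset.sum_insert hnotmem]
          have hrk : r ⟨k, hk⟩ ≤ t := hant (Fin.zero_le _)
          have := hGR k
          omega
        · have hfe : (univ.filter fun i : Fin (m+1) => (i : ℕ) < k+1) = univ :=
            Finset.filter_true_of_mem fun i _ => by have := i.isLt; omega
          have hLfull : (∑ i ∈ univ.filter (fun i : Fin (m+1) => (i : ℕ) < k+1), r i)
              = ∑ j, c j := by rw [hfe, hsum]
          have hRfull : (∑ j, min (c j) k) = ∑ j, c j := by
            refine Finset.sum_congr rfl fun j _ => ?_
            have := hcbound j; omega
          omega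
      · obtain ⟨j0, hj0⟩ := Finset.card_pos.mp hupos
        simp only [mem_filter] at hj0
        obtain ⟨hj0D, hj0k⟩ := hj0
        have hsub : (univ.filter fun j => k+1 ≤ c j) ⊆ D.filter fun j => ¬ c j ≤ k := by
          intro j hj
          simp only [mem_filter, mem_univ, true_and] at hj ⊢
          refine ⟨?_, by omega⟩
          by_contra hnd
          have := hup j0 hj0D j hnd
          omega
        have hcard2 : (D.filter fun j => ¬ c j ≤ k).card = t - u := by
          have := Finset.card_filter_add_card_filter_not (s := D) (p := fun j => c j ≤ k)
          rw [hcardD] at this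
          omega
        have hcount : (univ.filter fun j => k+1 ≤ c j).card ≤ t - u :=
          hcard2 ▸ Finset.card_le_card hsub
        have hstep : (∑ j, min (c j) (k+1))
            = (∑ j, min (c j) k) + (univ.filter fun j => k+1 ≤ c j).card := by
          rw [Finset.card_eq_sum_ones, Finset.sum_filter, ← Finset.sum_add_distrib]
          refine Finset.sum_congr rfl fun j _ => ?_
          by_cases hj : k + 1 ≤ c j <;> simp only [hj, if_true, if_false] <;> omega
        have := hGR (k+1)
        omega
    obtain ⟨M', hrow', hcol'⟩ := ih n r' c' hant' hsum' hGR'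
    refine ⟨fun i => Fin.cases (fun j => decide (j ∈ D)) (fun i' => M' i') i, ?_, ?_⟩
    · intro i
      refine Fin.cases ?_ ?_ i
      · simp only [Fin.cases_zero]
        calc (∑ j, if (decide (j ∈ D) : Bool) then (1:ℕ) else 0)
            = ∑ j, (if j ∈ D then (1:ℕ) else 0) := by
              refine Finset.sum_congr rfl fun j _ => by simp
          _ = t := hsumD
      · intro i'
        exact hrow' i'
    · intro j
      rw [Fin.sum_univ_succ]
      simp only [Fin.cases_zero, Fin.cases_succ]
      have h1 : (if (decide (j ∈ D) : Bool) then (1:ℕ) else 0) = (if j ∈ D then (1:ℕ) else 0) := by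
        simp
      erw [h1, hcol' j]
      have := hc'add j
      omega

theorem stmt_1 (n a b : ℕ) (hn : 0 < n) (d : Fin n → ℕ)
    (hpos : ∀ i, 0 < d i)
    (hmax : (∀ i, d i ≤ a) ∧ ∃ i, d i = a)
    (hmin : (∀ i, b ≤ d i) ∧ ∃ i, d i = b)
    (h : (a % 2 = b % 2 ∧ 4 * n * b ≥ (a + b) ^ 2) ∨
         (a % 2 ≠ b % 2 ∧ n * b ≥ (a + b) ^ 2 / 4)) :
    BipartiteGraphic d := by
  obtain ⟨ib, hib⟩ := hmin.2
  have hb1 : 1 ≤ b := hib ▸ hpos ib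
  have hba : b ≤ a := hib ▸ hmax.1 ib
  -- a ≤ n
  have han : a ≤ n := by
    have hab : a * b ≤ n * b := by
      rcases h with ⟨_, h2⟩ | ⟨_, h2⟩
      · nlinarith [sq_nonneg ((a:ℤ) - b)]
      · have h3 : a * b ≤ (a + b)^2 / 4 := by
          rw [Nat.le_div_iff_mul_le (by norm_num : (0:ℕ) < 4)]
          nlinarith [sq_nonneg ((a:ℤ) - b)]
        omega
    exact Nat.le_of_mul_le_mul_right hab hb1
  -- key inequality
  have key : ∀ k : ℕ, k * (a + b) ≤ n * b + k * k := by
    intro k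
    rcases h with ⟨_, h2⟩ | ⟨hpar, h2⟩
    · nlinarith [sq_nonneg ((a:ℤ) + b - 2 * k)]
    · have hodd : (a + b) % 2 = 1 := by omega
      obtain ⟨s, hs⟩ : ∃ s, a + b = 2 * s + 1 := ⟨(a+b)/2, by omega⟩
      have hsq : (a + b)^2 = 4 * (s * s + s) + 1 := by rw [hs]; ring
      have hdiv : (a + b)^2 / 4 = s * s + s := by omega
      rw [hdiv] at h2
      rcases le_or_gt k s with hks | hks
      · nlinarith [sq_nonneg ((s:ℤ) - k)]
      · nlinarith [sq_nonneg ((k:ℤ) - s - 1)]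
    -- sort d into antitone order
  set π : Equiv.Perm (Fin n) := (Fin.revPerm).trans (Tuple.sort d) with hπdef
  set r : Fin n → ℕ := fun i => d (π i) with hr
  have hant : Antitone r := by
    intro i1 i2 h12
    have hmono := Tuple.monotone_sort d
    have : Fin.rev i2 ≤ Fin.rev i1 := Fin.rev_le_rev.mpr h12
    have := hmono this
    simpa [hr, hπdef] using this
  have hrb : ∀ i, b ≤ r i := fun i => hmin.1 _
  have hra : ∀ i, r i ≤ a := fun i => hmax.1 _
  have hGR : ∀ k : ℕ, (∑ i ∈ univ.filter (fun i : Fin n => (i : ℕ) < k), r i)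
      ≤ ∑ j, min (r j) k := by
    intro k
    have hcard : (univ.filter fun i : Fin n => (i : ℕ) < k).card ≤ k := by
      rw [card_filter_val_lt]; omega
    rcases le_or_gt a k with hak | hak
    · -- k ≥ a : RHS is total sum
      have hRfull : (∑ j, min (r j) k) = ∑ j, r j := by
        refine Finset.sum_congr rfl fun j _ => ?_
        have := hra j; omega
      rw [hRfull]
      exact Finset.sum_le_sum_of_subset (Finset.subset_univ _)
    rcases le_or_gt k b with hkb | hkb
    · -- k ≤ b
      have hRfull : (∑ j, min (r j) k) = n * k := by
        rw [Finset.sum_congr rfl (fun j _ => ?_), Finset.sum_const, Finset.card_univ,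
          Fintype.card_fin, smul_eq_mul]
        have := hrb j; omega
      have hL : (∑ i ∈ univ.filter (fun i : Fin n => (i : ℕ) < k), r i)
          ≤ (univ.filter fun i : Fin n => (i : ℕ) < k).card * a := by
        calc _ ≤ ∑ _i ∈ univ.filter (fun i : Fin n => (i : ℕ) < k), a :=
              Finset.sum_le_sum fun i _ => hra i
          _ = _ := by rw [Finset.sum_const, smul_eq_mul]
      have : (univ.filter fun i : Fin n => (i : ℕ) < k).card * a ≤ k * a :=
        Nat.mul_le_mul_right _ hcard
      have hkann : k * a ≤ n * k := by
        calc k * a ≤ k * n := Nat.mul_le_mul_left _ han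
          _ = n * k := Nat.mul_comm _ _
      omega
    · -- b < k < a
      set A := (univ.filter fun i : Fin n => (i : ℕ) < k) with hA
      have hkn : k ≤ n := by omega
      have hcardA : A.card = k := by rw [hA, card_filter_val_lt]; omega
      have hL : (∑ i ∈ A, r i) ≤ (∑ i ∈ A, min (r i) k) + k * (a - k) := by
        calc (∑ i ∈ A, r i) ≤ ∑ i ∈ A, (min (r i) k + (a - k)) := by
              refine Finset.sum_le_sum fun i _ => ?_
              have := hra i; omega
          _ = (∑ i ∈ A, min (r i) k) + A.card * (a - k) := by
              rw [Finset.sum_add_distrib, Finset.sum_const, smul_eq_mul]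
          _ = (∑ i ∈ A, min (r i) k) + k * (a - k) := by rw [hcardA]
      have hRsplit : (∑ i ∈ univ \ A, min (r i) k) + (∑ i ∈ A, min (r i) k)
          = ∑ j, min (r j) k :=
        Finset.sum_sdiff (Finset.subset_univ A)
      have hRlow : (n - k) * b ≤ ∑ i ∈ univ \ A, min (r i) k := by
        calc (n - k) * b = (univ \ A).card * b := by
              rw [Finset.card_sdiff_of_subset (Finset.subset_univ A), Finset.card_univ,
                Fintype.card_fin, hcardA]
          _ = ∑ _i ∈ univ \ A, b := by rw [Finset.sum_const, smul_eq_mul]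
          _ ≤ _ := Finset.sum_le_sum fun i _ => by have := hrb i; omega
      have hkey := key k
      have hmul1 : k * (a + b) = k * a + k * b := Nat.mul_add k a b
      have hmul2 : k * (a - k) + k * k = k * a := by
        rw [← Nat.mul_add]; congr 1; omega
      have hmul3 : (n - k) * b + k * b = n * b := by
        rw [← Nat.add_mul]; congr 1; omega
      have hfinal : k * (a - k) ≤ (n - k) * b := by omega
      omega
  obtain ⟨M, hrow, hcol⟩ := grmain n n r r hant rfl hGR
  refine ⟨fun i j => M (π.symm i) (π.symm j), Equiv.refl _, ?_, ?_⟩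
  · intro i
    calc (∑ j, if M (π.symm i) (π.symm j) then (1:ℕ) else 0)
        = ∑ j, (if M (π.symm i) j then (1:ℕ) else 0) :=
          Equiv.sum_comp π.symm (fun j => if M (π.symm i) j then (1:ℕ) else 0)
      _ = r (π.symm i) := hrow _
      _ = d i := by rw [hr]; simp
  · intro j
    calc (∑ i, if M (π.symm i) (π.symm j) then (1:ℕ) else 0)
        = ∑ i, (if M i (π.symm j) then (1:ℕ) else 0) :=
          Equiv.sum_comp π.symm (fun i => if M i (π.symm j) then (1:ℕ) else 0)
      _ = r (π.symm j) := hcol _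
      _ = d (Equiv.refl _ j) := by rw [hr]; simp
end

section
/- Let a, b, n, s be positive integers with b < a ≤ n and s ≤ n. The sequence (a^s, b^{n-s}) (i.e., s copies of a followed by n−s copies of b) is bipartite graphic if and only if s² − (a+b)s + nb ≥ 0. -/
open Finset


lemma sum_ite_lt (n s x y : ℕ) (h : s ≤ n) :
    (∑ i ∈ range n, if i < s then x else y) = s * x + (n - s) * y := by
  rw [range_eq_Ico, ← Finset.sum_Ico_consecutive _ (Nat.zero_le s) h]
  have h1 : (∑ i ∈ Ico 0 s, if i < s then x else y) = s * x := by
    rw [Finset.sum_congr rfl (fun i hi => if_pos (mem_Ico.1 hi).2), sum_const, Nat.card_Ico,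
      smul_eq_mul, Nat.sub_zero]
  have h2 : (∑ i ∈ Ico s n, if i < s then x else y) = (n - s) * y := by
    rw [Finset.sum_congr rfl (fun i hi => if_neg (by have := (mem_Ico.1 hi).1; omega)),
      sum_const, Nat.card_Ico, smul_eq_mul]
  rw [h1, h2]

lemma greedy_sum (c : ℕ → ℕ) (E : ℕ) (k : ℕ) :
    (∑ i ∈ range k, min (c i) (E - ∑ i' ∈ range i, c i')) = min E (∑ i ∈ range k, c i) := by
  induction k with
  | zero => simp
  | succ k ih => rw [sum_range_succ, sum_range_succ, ih]; omega

lemma exists_r (a b n s : ℕ) (d : ℕ → ℕ) (hba : b < a) (han : a ≤ n) (hsn : s ≤ n)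
    (key : s * a ≤ s * s + (n - s) * b)
    (hdd : ∀ i, d i = if i < s then a else b) :
    ∃ r : ℕ → ℕ, (∀ i, r i ≤ s) ∧ (∀ i, r i ≤ d i) ∧ (∀ i, d i - r i ≤ n - s) ∧
      (∑ i ∈ range n, r i = s * a) ∧ (∑ i ∈ range n, (d i - r i) = (n - s) * b) := by
  obtain ⟨t, ht⟩ : ∃ t, n - s = t := ⟨_, rfl⟩
  rw [ht] at key ⊢
  have hn : n = s + t := by omega
  set u : ℕ → ℕ := fun i => min s (d i) with hu
  set l : ℕ → ℕ := fun i => d i - t with hl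
  set c : ℕ → ℕ := fun i => u i - l i with hc
  set L : ℕ := ∑ i ∈ range n, l i with hL
  set E : ℕ := s * a - L with hE
  set r : ℕ → ℕ := fun i => min (u i) (l i + (E - ∑ i' ∈ range i, c i')) with hr
  have hd_le : ∀ i, d i ≤ n := by intro i; rw [hdd i]; split <;> omega
  have hul : ∀ i, l i ≤ u i := by
    intro i; have := hd_le i; simp only [hl, hu]; omega
  have hlr : ∀ i, l i ≤ r i ∧ r i ≤ u i := by
    intro i; have := hul i; simp only [hr]; omega
  have hLval : L = s * (a - t) + t * (b - t) := by
    rw [hL]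
    have : ∀ i ∈ range n, l i = if i < s then (a - t) else (b - t) := by
      intro i _; simp only [hl]; rw [hdd i]; split <;> rfl
    rw [Finset.sum_congr rfl this, sum_ite_lt n s _ _ hsn, ht]
  have hL_le : L ≤ s * a := by
    rw [hLval]
    rcases le_or_gt t a with hta | hta
    · calc s * (a - t) + t * (b - t) ≤ s * (a - t) + t * s := by gcongr; omega
        _ = s * (a - t) + s * t := by ring
        _ = s * ((a - t) + t) := (Nat.mul_add s _ t).symm
        _ ≤ s * a := Nat.mul_le_mul_left s (by omega)
    · have e1 : a - t = 0 := by omega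
      have e2 : b - t = 0 := by omega
      simp [e1, e2]
  have hUval : (∑ i ∈ range n, u i) = s * min s a + t * min s b := by
    have : ∀ i ∈ range n, u i = if i < s then min s a else min s b := by
      intro i _; simp only [hu]; rw [hdd i]; split <;> rfl
    rw [Finset.sum_congr rfl this, sum_ite_lt n s _ _ hsn, ht]
  have hU_ge : s * a ≤ ∑ i ∈ range n, u i := by
    rw [hUval]
    rcases le_or_gt a s with h1 | h1
    · rw [min_eq_right h1]; omega
    · rw [min_eq_left (by omega : s ≤ a)]
      rcases le_or_gt b s with h2 | h2
      · rw [min_eq_right h2]; exact key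
      · rw [min_eq_left (by omega : s ≤ b)]
        have hsa : s * a ≤ s * n := Nat.mul_le_mul_left s han
        have hsn2 : s * n = s * s + t * s := by rw [hn, Nat.mul_add, Nat.mul_comm s t]
        omega
  have hsumc : (∑ i ∈ range n, c i) + L = ∑ i ∈ range n, u i := by
    rw [hL, ← Finset.sum_add_distrib]
    exact Finset.sum_congr rfl (fun i _ => by have := hul i; simp only [hc]; omega)
  have hEc : E ≤ ∑ i ∈ range n, c i := by omega
  have hsum_r : ∑ i ∈ range n, r i = s * a := by
    have : ∀ i ∈ range n, r i = l i + min (c i) (E - ∑ i' ∈ range i, c i') := by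
      intro i _; have := hul i; simp only [hr, hc]; omega
    rw [Finset.sum_congr rfl this, Finset.sum_add_distrib, greedy_sum, ← hL,
      min_eq_left hEc]
    omega
  refine ⟨r, ?_, ?_, ?_, hsum_r, ?_⟩
  · intro i; have := (hlr i).2; simp only [hu] at this; omega
  · intro i; have h1 := (hlr i).2
    have h2 : u i ≤ d i := min_le_right _ _
    omega
  · intro i; have := (hlr i).1; simp only [hl] at this; omega
  · have hsum_d : ∑ i ∈ range n, d i = s * a + t * b := by
      rw [Finset.sum_congr rfl (fun i (_ : i ∈ range n) => hdd i), sum_ite_lt n s _ _ hsn, ht]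
    have hpt : ∀ i ∈ range n, d i - r i + r i = d i := by
      intro i _
      have h1 := (hlr i).2
      have h2 : u i ≤ d i := min_le_right _ _
      omega
    have : (∑ i ∈ range n, (d i - r i)) + ∑ i ∈ range n, r i = ∑ i ∈ range n, d i := by
      rw [← Finset.sum_add_distrib]; exact Finset.sum_congr rfl hpt
    omega


lemma card_filter_mod_le_one (P r s j : ℕ) (hr : r ≤ s) :
    ((Ico P (P+r)).filter (fun m => m % s = j)).card ≤ 1 := by
  refine card_le_one.2 (fun x hx y hy => ?_)
  simp only [mem_filter, mem_Ico] at hx hy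
  obtain ⟨⟨hx1, hx2⟩, hx3⟩ := hx
  obtain ⟨⟨hy1, hy2⟩, hy3⟩ := hy
  have hmod : x % s = y % s := by omega
  rcases Nat.le_total x y with h | h
  · obtain ⟨k, hk⟩ := (Nat.modEq_iff_dvd' h).1 hmod
    rcases k with _ | k
    · omega
    · have : s * (k+1) ≥ s := by nlinarith
      omega
  · obtain ⟨k, hk⟩ := (Nat.modEq_iff_dvd' h).1 hmod.symm
    rcases k with _ | k
    · omega
    · have : s * (k+1) ≥ s := by nlinarith
      omega

lemma ind_eq_card (P r s j : ℕ) (hr : r ≤ s) :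
    (if ∃ m ∈ Ico P (P+r), m % s = j then (1:ℕ) else 0)
      = ((Ico P (P+r)).filter (fun m => m % s = j)).card := by
  have hle := card_filter_mod_le_one P r s j hr
  by_cases h : ∃ m ∈ Ico P (P+r), m % s = j
  · obtain ⟨m, hm, hmod⟩ := h
    have hpos : 0 < ((Ico P (P+r)).filter (fun m => m % s = j)).card :=
      card_pos.2 ⟨m, mem_filter.2 ⟨hm, hmod⟩⟩
    rw [if_pos (⟨m, hm, hmod⟩ : ∃ m ∈ Ico P (P+r), m % s = j)]
    omega
  · rw [if_neg h, eq_comm, card_eq_zero, filter_eq_empty_iff]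
    push_neg at h
    exact h

lemma row_sum_eq (P r s : ℕ) (hr : r ≤ s) :
    (∑ j ∈ range s, if ∃ m ∈ Ico P (P+r), m % s = j then (1:ℕ) else 0) = r := by
  rw [Finset.sum_congr rfl (fun j _ => ind_eq_card P r s j hr)]
  rcases Nat.eq_zero_or_pos s with hs | hs
  · subst hs; simp; omega
  · rw [← card_eq_sum_card_fiberwise (f := fun m => m % s) (t := range s)]
    · rw [Nat.card_Ico]; omega
    · intro m _; exact mem_range.2 (Nat.mod_lt _ hs)

lemma telescope_card (P : ℕ → ℕ) (hP : ∀ i, P i ≤ P (i+1)) (pred : ℕ → Prop)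
    [DecidablePred pred] (k : ℕ) :
    (∑ i ∈ range k, ((Ico (P i) (P (i+1))).filter pred).card)
      = ((Ico (P 0) (P k)).filter pred).card := by
  have hmono : Monotone P := monotone_nat_of_le_succ hP
  induction k with
  | zero => simp
  | succ k ih =>
    rw [sum_range_succ, ih, ← card_union_of_disjoint, ← filter_union,
      Finset.Ico_union_Ico_eq_Ico (hmono (Nat.zero_le k)) (hP k)]
    exact disjoint_filter_filter (Ico_disjoint_Ico_consecutive _ _ _)

lemma filter_mod_card (s A j : ℕ) (hj : j < s) :
    ((range (s*A)).filter (fun m => m % s = j)).card = A := by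
  have himg : (range (s*A)).filter (fun m => m % s = j)
      = (range A).image (fun q => q * s + j) := by
    ext m
    simp only [mem_filter, mem_range, mem_image]
    constructor
    · rintro ⟨hm, rfl⟩
      refine ⟨m / s, Nat.div_lt_of_lt_mul (by omega), ?_⟩
      rw [Nat.mul_comm]; exact Nat.div_add_mod m s
    · rintro ⟨q, hq, rfl⟩
      refine ⟨?_, ?_⟩
      · have h1 : q * s + s ≤ A * s := by nlinarith
        have h2 : s * A = A * s := Nat.mul_comm _ _
        omega
      · rw [Nat.mul_comm q s, Nat.mul_add_mod, Nat.mod_eq_of_lt hj]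
  rw [himg, card_image_of_injective _ (fun x y h => by
    have h2 : x * s = y * s := by omega
    exact Nat.eq_of_mul_eq_mul_right (by omega) h2), card_range]

lemma spiral_col (n s A j : ℕ) (r : ℕ → ℕ) (hr : ∀ i, r i ≤ s)
    (htot : ∑ i ∈ range n, r i = s * A) (hj : j < s) :
    (∑ i ∈ range n, if ∃ m ∈ Ico (∑ i' ∈ range i, r i') ((∑ i' ∈ range i, r i') + r i),
        m % s = j then (1:ℕ) else 0) = A := by
  have step1 : ∀ i ∈ range n,
      (if ∃ m ∈ Ico (∑ i' ∈ range i, r i') ((∑ i' ∈ range i, r i') + r i),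
          m % s = j then (1:ℕ) else 0)
        = ((Ico ((fun k => ∑ i' ∈ range k, r i') i) ((fun k => ∑ i' ∈ range k, r i') (i+1))).filter
            (fun m => m % s = j)).card := by
    intro i _
    rw [ind_eq_card _ _ _ _ (hr i)]
    congr 1
    simp [sum_range_succ]
  rw [Finset.sum_congr rfl step1,
    telescope_card _ (fun i => by rw [sum_range_succ]; exact Nat.le_add_right _ _) _ n]
  simp only [range_zero, sum_empty]
  rw [htot, ← range_eq_Ico]
  exact filter_mod_card s A j hj

lemma sum_range_split (f : ℕ → ℕ) (s n : ℕ) (h : s ≤ n) :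
    (∑ j ∈ range n, f j) = (∑ j ∈ range s, f j) + ∑ j ∈ Ico s n, f j := by
  rw [range_eq_Ico, ← Finset.sum_Ico_consecutive _ (Nat.zero_le s) h, ← range_eq_Ico]

theorem stmt_3 (a b n s : ℕ) (hb : 0 < b) (hba : b < a) (han : a ≤ n) (hs : 0 < s)
    (hsn : s ≤ n) :
    BipartiteGraphic (fun i : Fin n => if (i : ℕ) < s then a else b) ↔
      (0 : ℤ) ≤ (s : ℤ) ^ 2 - (a + b) * s + n * b := by
  constructor
  · -- necessity
    rintro ⟨M, e, hrow, hcol⟩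
    have key : s * a ≤ s * s + (n - s) * b := by
      set S : Finset (Fin n) := univ.filter (fun i => (i:ℕ) < s) with hS
      have hcardS : S.card = s := by
        rw [hS, card_filter]
        rw [Fin.sum_univ_eq_sum_range (fun i => if i < s then (1:ℕ) else 0) n]
        rw [sum_ite_lt n s 1 0 hsn]
        omega
      have h1 : (∑ i ∈ S, ∑ j, if M i j then (1:ℕ) else 0) = s * a := by
        rw [Finset.sum_congr rfl (fun i _ => hrow i)]
        have : ∀ i ∈ S, (if (i:ℕ) < s then a else b) = a := by
          intro i hi
          rw [hS, mem_filter] at hi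
          exact if_pos hi.2
        rw [Finset.sum_congr rfl this, sum_const, hcardS, smul_eq_mul]
      rw [Finset.sum_comm] at h1
      have h3 : ∀ j : Fin n, (∑ i ∈ S, if M i j then (1:ℕ) else 0)
          ≤ if ((e j : Fin n) : ℕ) < s then s else b := by
        intro j
        have hA : (∑ i ∈ S, if M i j then (1:ℕ) else 0) ≤ s := by
          calc (∑ i ∈ S, if M i j then (1:ℕ) else 0) ≤ ∑ i ∈ S, 1 := by
                gcongr with i hi
                split <;> omega
            _ = s := by rw [sum_const, hcardS, smul_eq_mul, mul_one]
        have hB : (∑ i ∈ S, if M i j then (1:ℕ) else 0)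
            ≤ ∑ i, if M i j then (1:ℕ) else 0 :=
          Finset.sum_le_sum_of_subset (subset_univ S)
        rw [hcol j] at hB
        simp only at hB
        split at hB <;> split <;> omega
      have h4 : (∑ j : Fin n, if ((e j : Fin n) : ℕ) < s then s else b)
          = s * s + (n - s) * b := by
        rw [Equiv.sum_comp e (fun i : Fin n => if (i : ℕ) < s then s else b)]
        rw [Fin.sum_univ_eq_sum_range (fun i => if i < s then s else b) n]
        exact sum_ite_lt n s s b hsn
      calc s * a = ∑ j : Fin n, ∑ i ∈ S, if M i j then (1:ℕ) else 0 := h1.symm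
        _ ≤ ∑ j : Fin n, (if ((e j : Fin n) : ℕ) < s then s else b) :=
            Finset.sum_le_sum (fun j _ => h3 j)
        _ = s * s + (n - s) * b := h4
    have keyZ : ((s:ℤ) * a) ≤ (s:ℤ) * s + ((n:ℤ) - s) * b := by
      have := (Nat.cast_le (α := ℤ)).2 key
      push_cast [Nat.cast_sub hsn] at this
      linarith
    nlinarith [keyZ]
  · -- sufficiency
    intro hcond
    have key : s * a ≤ s * s + (n - s) * b := by
      have h' : ((s * a : ℕ) : ℤ) ≤ ((s * s + (n - s) * b : ℕ) : ℤ) := by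
        push_cast [Nat.cast_sub hsn]
        nlinarith [hcond]
      exact_mod_cast h'
    obtain ⟨r, hr_s, hr_d, hr'_t, htot, htot'⟩ :=
      exists_r a b n s (fun i => if i < s then a else b) hba han hsn key (fun i => rfl)
    refine ⟨fun i j => if (j:ℕ) < s
      then decide (∃ m ∈ Ico (∑ i' ∈ range (i:ℕ), r i')
        ((∑ i' ∈ range (i:ℕ), r i') + r (i:ℕ)), m % s = (j:ℕ))
      else decide (∃ m ∈ Ico (∑ i' ∈ range (i:ℕ), ((if i' < s then a else b) - r i'))
        ((∑ i' ∈ range (i:ℕ), ((if i' < s then a else b) - r i'))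
          + ((if (i:ℕ) < s then a else b) - r (i:ℕ))),
        m % (n - s) = (j:ℕ) - s), Equiv.refl _, ?_, ?_⟩
    · -- row sums
      intro i
      simp only [apply_ite (fun b : Bool => if b then (1:ℕ) else 0), decide_eq_true_eq]
      rw [Fin.sum_univ_eq_sum_range (fun j => if j < s
        then (if (∃ m ∈ Ico (∑ i' ∈ range (i:ℕ), r i')
          ((∑ i' ∈ range (i:ℕ), r i') + r (i:ℕ)), m % s = j) then (1:ℕ) else 0)
        else (if (∃ m ∈ Ico (∑ i' ∈ range (i:ℕ), ((if i' < s then a else b) - r i'))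
          ((∑ i' ∈ range (i:ℕ), ((if i' < s then a else b) - r i'))
            + ((if (i:ℕ) < s then a else b) - r (i:ℕ))),
          m % (n - s) = j - s) then (1:ℕ) else 0)) n]
      rw [sum_range_split _ s n hsn]
      have hpart1 : (∑ j ∈ range s, if j < s
          then (if (∃ m ∈ Ico (∑ i' ∈ range (i:ℕ), r i')
            ((∑ i' ∈ range (i:ℕ), r i') + r (i:ℕ)), m % s = j) then (1:ℕ) else 0)
          else (if (∃ m ∈ Ico (∑ i' ∈ range (i:ℕ), ((if i' < s then a else b) - r i'))
            ((∑ i' ∈ range (i:ℕ), ((if i' < s then a else b) - r i'))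
              + ((if (i:ℕ) < s then a else b) - r (i:ℕ))),
            m % (n - s) = j - s) then (1:ℕ) else 0)) = r (i:ℕ) := by
        rw [Finset.sum_congr rfl (fun j hj => if_pos (mem_range.1 hj))]
        exact row_sum_eq _ _ _ (hr_s (i:ℕ))
      have hpart2 : (∑ j ∈ Ico s n, if j < s
          then (if (∃ m ∈ Ico (∑ i' ∈ range (i:ℕ), r i')
            ((∑ i' ∈ range (i:ℕ), r i') + r (i:ℕ)), m % s = j) then (1:ℕ) else 0)
          else (if (∃ m ∈ Ico (∑ i' ∈ range (i:ℕ), ((if i' < s then a else b) - r i'))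
            ((∑ i' ∈ range (i:ℕ), ((if i' < s then a else b) - r i'))
              + ((if (i:ℕ) < s then a else b) - r (i:ℕ))),
            m % (n - s) = j - s) then (1:ℕ) else 0))
          = (if (i:ℕ) < s then a else b) - r (i:ℕ) := by
        rw [Finset.sum_Ico_eq_sum_range]
        have hcg : ∀ k ∈ range (n - s), (if s + k < s
            then (if (∃ m ∈ Ico (∑ i' ∈ range (i:ℕ), r i')
              ((∑ i' ∈ range (i:ℕ), r i') + r (i:ℕ)), m % s = s + k) then (1:ℕ) else 0)
            else (if (∃ m ∈ Ico (∑ i' ∈ range (i:ℕ), ((if i' < s then a else b) - r i'))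
              ((∑ i' ∈ range (i:ℕ), ((if i' < s then a else b) - r i'))
                + ((if (i:ℕ) < s then a else b) - r (i:ℕ))),
              m % (n - s) = s + k - s) then (1:ℕ) else 0))
            = (if (∃ m ∈ Ico (∑ i' ∈ range (i:ℕ), ((if i' < s then a else b) - r i'))
              ((∑ i' ∈ range (i:ℕ), ((if i' < s then a else b) - r i'))
                + ((if (i:ℕ) < s then a else b) - r (i:ℕ))),
              m % (n - s) = k) then (1:ℕ) else 0) := by
          intro k _
          rw [if_neg (by omega), Nat.add_sub_cancel_left]
        rw [Finset.sum_congr rfl hcg]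
        exact row_sum_eq _ _ _ (hr'_t (i:ℕ))
      rw [hpart1, hpart2]
      have := hr_d (i:ℕ)
      omega
    · -- column sums
      intro j
      simp only [Equiv.refl_apply]
      by_cases hj : (j:ℕ) < s
      · simp only [hj, if_true, decide_eq_true_eq]
        rw [Fin.sum_univ_eq_sum_range (fun i => if (∃ m ∈ Ico (∑ i' ∈ range i, r i')
          ((∑ i' ∈ range i, r i') + r i), m % s = (j:ℕ)) then (1:ℕ) else 0) n]
        exact spiral_col n s a (j:ℕ) r hr_s htot hj
      · simp only [hj, if_false, decide_eq_true_eq]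
        rw [Fin.sum_univ_eq_sum_range (fun i => if (∃ m ∈ Ico
          (∑ i' ∈ range i, ((if i' < s then a else b) - r i'))
          ((∑ i' ∈ range i, ((if i' < s then a else b) - r i'))
            + ((if i < s then a else b) - r i)),
          m % (n - s) = (j:ℕ) - s) then (1:ℕ) else 0) n]
        exact spiral_col n (n - s) b ((j:ℕ) - s)
          (fun i => (if i < s then a else b) - r i) hr'_t htot' (by have := j.isLt; omega)
end

section
/- If a ≡ b (mod 2), b < a ≤ n, and 4nb < (a+b)², then the sequence consisting of (a+b)/2 copies of a and n − (a+b)/2 copies of b is not bipartite graphic. -/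
theorem stmt_4 (a b n : ℕ) (hb : 0 < b) (hba : b < a) (han : a ≤ n)
    (hpar : a % 2 = b % 2) (h : 4 * n * b < (a + b) ^ 2) :
    ¬ BipartiteGraphic (fun i : Fin n => if (i : ℕ) < (a + b) / 2 then a else b) := by
  rintro ⟨M, e, hrow, hcol⟩
  set d : Fin n → ℕ := fun i : Fin n => if (i : ℕ) < (a + b) / 2 then a else b with hd
  set k := (a + b) / 2 with hk
  have hk2 : 2 * k = a + b := by omega
  have hkb : b < k := by omega
  have hka : k < a := by omega
  have hkn : k ≤ n := by omega
  set R : Finset (Fin n) := Finset.univ.filter (fun i => (i : ℕ) < k) with hR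
  have hcardR : R.card = k := by
    have : R = (Finset.univ : Finset (Fin k)).map
        ⟨Fin.castLE hkn, Fin.castLE_injective hkn⟩ := by
      ext i
      simp only [hR, Finset.mem_filter, Finset.mem_univ, true_and, Finset.mem_map,
        Function.Embedding.coeFn_mk]
      constructor
      · intro hi
        exact ⟨⟨(i : ℕ), hi⟩, by ext; simp⟩
      · rintro ⟨j, rfl⟩
        exact j.2
    rw [this, Finset.card_map, Finset.card_univ, Fintype.card_fin]
  -- count edges from rows in R
  have hsum1 : ∑ i ∈ R, ∑ j, (if M i j then 1 else 0) = k * a := by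
    have : ∀ i ∈ R, (∑ j, if M i j then 1 else 0) = a := by
      intro i hi
      rw [hrow i]
      simp only [hd]
      rw [if_pos]
      exact (Finset.mem_filter.mp hi).2
    rw [Finset.sum_congr rfl this, Finset.sum_const, hcardR, smul_eq_mul]
  have hswap : ∑ i ∈ R, ∑ j, (if M i j then 1 else 0)
      = ∑ j, ∑ i ∈ R, (if M i j then 1 else 0) := Finset.sum_comm
  have hbound : ∀ j, (∑ i ∈ R, if M i j then 1 else 0) ≤ min k (d (e j)) := by
    intro j
    refine le_min ?_ ?_
    · calc (∑ i ∈ R, if M i j then 1 else 0) ≤ ∑ i ∈ R, 1 := by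
            refine Finset.sum_le_sum fun i _ => ?_
            split <;> omega
        _ = k := by rw [Finset.sum_const, hcardR, smul_eq_mul, mul_one]
    · calc (∑ i ∈ R, if M i j then 1 else 0)
          ≤ ∑ i, (if M i j then 1 else 0) :=
            Finset.sum_le_sum_of_subset (Finset.subset_univ R)
        _ = d (e j) := hcol j
  have key1 : k * a ≤ ∑ j, min k (d (e j)) := by
    rw [← hsum1, hswap]
    exact Finset.sum_le_sum fun j _ => hbound j
  have key2 : ∑ j, min k (d (e j)) = ∑ j, min k (d j) :=
    Equiv.sum_comp e (fun j => min k (d j))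
  have key3 : ∑ j, min k (d j) = k * k + (n - k) * b := by
    have : ∀ j : Fin n, min k (d j) = if (j : ℕ) < k then k else b := by
      intro j
      simp only [hd]
      split
      · exact min_eq_left hka.le
      · exact min_eq_right hkb.le
    rw [Finset.sum_congr rfl fun j _ => this j, Finset.sum_ite, Finset.sum_const,
      Finset.sum_const, smul_eq_mul, smul_eq_mul]
    have h1 : (Finset.univ.filter (fun j : Fin n => (j : ℕ) < k)).card = k := hcardR
    have h2 : (Finset.univ.filter (fun j : Fin n => ¬ (j : ℕ) < k)).card = n - k := by
      have := Finset.card_filter_add_card_filter_not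
        (s := (Finset.univ : Finset (Fin n))) (p := fun j : Fin n => (j : ℕ) < k)
      rw [Finset.card_univ, Fintype.card_fin] at this
      omega
    rw [h1, h2]
  have key : k * a ≤ k * k + (n - k) * b := by
    rw [← key3, ← key2]; exact key1
  have hnk : (n - k) * b = n * b - k * b := by
    rw [Nat.sub_mul]
  have hkbn : k * b ≤ n * b := Nat.mul_le_mul_right b hkn
  have key' : k * a + k * b ≤ k * k + n * b := by omega
  nlinarith [key', hk2, sq_nonneg (a + b)]
end

section
/- If a ≢ b (mod 2), b < a ≤ n, and 4nb < (a+b)² − 1, then the sequence consisting of (a+b+1)/2 copies of a and n − (a+b+1)/2 copies of b is not bipartite graphic. -/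
theorem stmt_5 (a b n : ℕ) (hb : 0 < b) (hba : b < a) (han : a ≤ n)
    (hpar : a % 2 ≠ b % 2) (h : 4 * n * b < (a + b) ^ 2 - 1) :
    ¬ BipartiteGraphic (fun i : Fin n => if (i : ℕ) < (a + b + 1) / 2 then a else b) := by
  rintro ⟨M, e, hrow, hcol⟩
  classical
  set k := (a + b + 1) / 2 with hkdef
  have hk : a + b + 1 = 2 * k := by omega
  have hkn : k ≤ n := by omega
  set S : Finset (Fin n) := Finset.univ.filter (fun i => (i : ℕ) < k) with hS
  set T : Finset (Fin n) := Finset.univ.filter (fun j => ((e j : Fin n) : ℕ) < k) with hT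
  have hScard : S.card = k := by
    have hmem : ∀ m ∈ Finset.range k, m < n := fun m hm => by
      have := Finset.mem_range.mp hm; omega
    have : S = (Finset.range k).attachFin hmem := by
      ext i
      simp [hS, Finset.mem_attachFin, Finset.mem_range]
    rw [this, Finset.card_attachFin, Finset.card_range]
  have hTcard : T.card = k := by
    have : T = S.map e.symm.toEmbedding := by
      ext j
      simp only [hT, hS, Finset.mem_map, Finset.mem_filter, Finset.mem_univ, true_and,
        Equiv.coe_toEmbedding]
      constructor
      · intro hj
        exact ⟨e j, hj, e.symm_apply_apply j⟩
      · rintro ⟨i, hi, rfl⟩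
        simpa using hi
    rw [this, Finset.card_map, hScard]
  have hTc : (Finset.univ.filter (fun j => ¬ ((e j : Fin n) : ℕ) < k)).card = n - k := by
    have := Finset.card_filter_add_card_filter_not
      (s := (Finset.univ : Finset (Fin n))) (p := fun j => ((e j : Fin n) : ℕ) < k)
    simp only [Finset.card_univ, Fintype.card_fin] at this
    rw [← hT] at this
    omega
  -- main counting
  have h1 : ∑ i ∈ S, (∑ j, if M i j then (1:ℕ) else 0) = k * a := by
    have hconst : ∀ i ∈ S, (∑ j, if M i j then (1:ℕ) else 0) = a := by
      intro i hi
      rw [hrow i]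
      simp only [hS, Finset.mem_filter] at hi
      simp [hi.2]
    rw [Finset.sum_congr rfl hconst, Finset.sum_const, hScard, smul_eq_mul]
  have h2 : ∑ i ∈ S, (∑ j, if M i j then (1:ℕ) else 0)
      = ∑ j, ∑ i ∈ S, (if M i j then (1:ℕ) else 0) := Finset.sum_comm
  have h3 : (∑ j : Fin n, ∑ i ∈ S, (if M i j then (1:ℕ) else 0))
      = (∑ j ∈ T, ∑ i ∈ S, (if M i j then (1:ℕ) else 0))
        + ∑ j ∈ Finset.univ.filter (fun j => ¬ ((e j : Fin n) : ℕ) < k),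
            ∑ i ∈ S, (if M i j then (1:ℕ) else 0) := by
    rw [hT]
    exact (Finset.sum_filter_add_sum_filter_not Finset.univ _ _).symm
  have h4 : (∑ j ∈ T, ∑ i ∈ S, (if M i j then (1:ℕ) else 0)) ≤ k * k := by
    calc (∑ j ∈ T, ∑ i ∈ S, (if M i j then (1:ℕ) else 0))
        ≤ ∑ j ∈ T, ∑ i ∈ S, 1 := by
          refine Finset.sum_le_sum fun j _ => Finset.sum_le_sum fun i _ => ?_
          split <;> simp
      _ = k * k := by
          simp [Finset.sum_const, hTcard, hScard, mul_comm]
  have h5 : (∑ j ∈ Finset.univ.filter (fun j => ¬ ((e j : Fin n) : ℕ) < k),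
        ∑ i ∈ S, (if M i j then (1:ℕ) else 0)) ≤ (n - k) * b := by
    calc (∑ j ∈ Finset.univ.filter (fun j => ¬ ((e j : Fin n) : ℕ) < k),
          ∑ i ∈ S, (if M i j then (1:ℕ) else 0))
        ≤ ∑ j ∈ Finset.univ.filter (fun j => ¬ ((e j : Fin n) : ℕ) < k), b := by
          refine Finset.sum_le_sum fun j hj => ?_
          simp only [Finset.mem_filter, Finset.mem_univ, true_and] at hj
          have hsub : (∑ i ∈ S, (if M i j then (1:ℕ) else 0))
              ≤ ∑ i, (if M i j then (1:ℕ) else 0) :=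
            Finset.sum_le_sum_of_subset (Finset.subset_univ S)
          rw [hcol j] at hsub
          simpa [hj] using hsub
      _ = (n - k) * b := by rw [Finset.sum_const, hTc, smul_eq_mul]
  have key : k * a ≤ k * k + (n - k) * b := by
    rw [← h1, h2, h3]; omega
  have key2 : k * a + k * b ≤ k * k + n * b := by
    have : (n - k) * b + k * b = n * b := by
      rw [← Nat.add_mul, Nat.sub_add_cancel hkn]
    omega
  have h' : 4 * n * b + 1 < (a + b) ^ 2 := lt_tsub_iff_right.mp h
  have e2 : (a + b) ^ 2 + 2 * (a + b) + 1 = 4 * (k * k) := by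
    calc (a + b) ^ 2 + 2 * (a + b) + 1 = (a + b + 1) ^ 2 := by ring
      _ = (2 * k) ^ 2 := by rw [hk]
      _ = 4 * (k * k) := by ring
  have e3 : k * a + k * b + k = 2 * (k * k) := by
    calc k * a + k * b + k = k * (a + b + 1) := by ring
      _ = k * (2 * k) := by rw [hk]
      _ = 2 * (k * k) := by ring
  have hnb : 4 * n * b = 4 * (n * b) := by ring
  rw [hnb] at h'
  linarith [h', e2, e3, key2, hk]
end

section
/- Let d = (d₁,…,dₙ) be a decreasing sequence of positive integers and for each integer j let n_j denote the number of elements of d equal to j. Then d is bipartite graphic if and only if for every strong index k (an index k with d_k ≥ k) one has Σ_{i=1}^{k}(d_i + i·n_{k−i}) ≤ kn. -/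
open Finset

theorem sum_filter_lt_eq_range (n k : ℕ) (hn : 0 < n) (hk : k ≤ n) (f : ℕ → ℕ) :
    ∑ i ∈ Finset.filter (fun i : Fin n => (i:ℕ) < k) Finset.univ, f (i:ℕ)
      = ∑ i ∈ Finset.range k, f i := by
  refine Finset.sum_nbij' (fun i : Fin n => (i:ℕ))
    (fun m => (⟨m % n, Nat.mod_lt _ hn⟩ : Fin n)) ?_ ?_ ?_ ?_ ?_
  · intro a ha; simpa using (Finset.mem_filter.mp ha).2
  · intro a ha
    simp only [Finset.mem_filter, Finset.mem_univ, true_and]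
    have := Finset.mem_range.mp ha
    rw [Nat.mod_eq_of_lt (by omega)]; omega
  · intro a _; apply Fin.ext; simp [Nat.mod_eq_of_lt a.isLt]
  · intro a ha; have := Finset.mem_range.mp ha; simp [Nat.mod_eq_of_lt (by omega : a < n)]
  · intro a _; rfl

lemma galeRyser (n : ℕ) : ∀ (N : ℕ) (r c : Fin n → ℕ),
    (∑ i, r i = ∑ j, c j) → (∑ j, c j = N) →
    (∀ S : Finset (Fin n), ∑ j ∈ S, c j ≤ ∑ i, min (r i) S.card) →
    ∃ M : Fin n → Fin n → Bool,
      (∀ i, (∑ j, if M i j then 1 else 0) = r i) ∧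
      (∀ j, (∑ i, if M i j then 1 else 0) = c j) := by
  intro N
  induction N using Nat.strong_induction_on with
  | _ N ih =>
  intro r c hsum hN hcond
  by_cases h0 : N = 0
  · subst h0
    have hc : ∀ j, c j = 0 := by
      intro j
      have := Finset.sum_eq_zero_iff.mp hN j (mem_univ j)
      exact this
    have hr : ∀ i, r i = 0 := by
      intro i
      have : ∑ i, r i = 0 := by rw [hsum, hN]
      exact Finset.sum_eq_zero_iff.mp this i (mem_univ i)
    exact ⟨fun _ _ => false, by simp [hr], by simp [hc]⟩
  · obtain ⟨j₀, hj₀⟩ : ∃ j, c j ≠ 0 := by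
      by_contra h
      push_neg at h
      exact h0 (by rw [← hN]; exact Finset.sum_eq_zero fun j _ => h j)
    set t := c j₀ with ht
    have ht1 : 1 ≤ t := Nat.pos_of_ne_zero hj₀
    -- t ≤ number of rows with r i ≥ 1
    have hmin1 : ∀ w : ℕ, 1 ≤ w → (∑ i, min (r i) w) ≥ (∑ i, min (r i) 1) := by
      intro w hw; exact Finset.sum_le_sum fun i _ => by omega
    have hcard1 : t ≤ (univ.filter fun i => 1 ≤ r i).card := by
      have h1 := hcond {j₀}
      simp only [Finset.sum_singleton, Finset.card_singleton] at h1
      have h2 : (∑ i, min (r i) 1) = (univ.filter fun i => 1 ≤ r i).card := by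
        rw [Finset.card_filter]
        exact Finset.sum_congr rfl fun i _ => by split <;> omega
      omega
    -- threshold v
    set B := (∑ i, r i) + 1 with hB
    have hB1 : 1 ≤ B := by omega
    have hQ1 : t ≤ (univ.filter fun i => 1 ≤ r i).card := hcard1
    have hQB : ¬ t ≤ (univ.filter fun i => B ≤ r i).card := by
      have hemp : (univ.filter fun i => B ≤ r i) = ∅ := by
        apply Finset.filter_eq_empty_iff.mpr
        intro i _
        have : r i ≤ ∑ i, r i := Finset.single_le_sum (fun i _ => Nat.zero_le _) (mem_univ i)
        omega
      rw [hemp]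
      simp only [Finset.card_empty]
      omega
    set v := Nat.findGreatest (fun w => t ≤ (univ.filter fun i => w ≤ r i).card) B with hv
    have hv1 : 1 ≤ v := Nat.le_findGreatest (P := fun w => t ≤ (univ.filter fun i => w ≤ r i).card) hB1 hQ1
    have hQvB : v ≤ B := Nat.findGreatest_le B
    have hQv : t ≤ (univ.filter fun i => v ≤ r i).card :=
      Nat.findGreatest_spec (P := fun w => t ≤ (univ.filter fun i => w ≤ r i).card) hB1 hQ1
    have hvltB : v < B := lt_of_le_of_ne hQvB (fun h => hQB (h ▸ hQv))
    have hQv1 : ¬ t ≤ (univ.filter fun i => (v+1) ≤ r i).card :=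
      Nat.findGreatest_is_greatest (P := fun w => t ≤ (univ.filter fun i => w ≤ r i).card)
        (n := B) (by omega) (by omega)
    -- choose T
    have hsubset : (univ.filter fun i => v + 1 ≤ r i) ⊆ (univ.filter fun i => v ≤ r i) := by
      intro i hi
      have := (Finset.mem_filter.mp hi).2
      exact Finset.mem_filter.mpr ⟨mem_univ _, by omega⟩
    obtain ⟨T, hTsub1, hTsub2, hTcard⟩ :=
      Finset.exists_subsuperset_card_eq hsubset (by omega) hQv
    have hT1 : ∀ i ∈ T, 1 ≤ r i := by
      intro i hi
      have := (Finset.mem_filter.mp (hTsub2 hi)).2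
      omega
    have hTtop : ∀ i ∈ T, ∀ i' ∉ T, r i' ≤ r i := by
      intro i hi i' hi'
      have h1 : v ≤ r i := (Finset.mem_filter.mp (hTsub2 hi)).2
      have h2 : ¬ (v + 1 ≤ r i') := fun h => hi' (hTsub1 (Finset.mem_filter.mpr ⟨mem_univ _, h⟩))
      omega
    -- new row/col sums
    set r' : Fin n → ℕ := fun i => if i ∈ T then r i - 1 else r i with hr'
    set c' : Fin n → ℕ := Function.update c j₀ 0 with hc'
    have hsumT : (∑ i, (if i ∈ T then (1:ℕ) else 0)) = t := by
      rw [← Finset.card_filter]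
      rw [Finset.filter_mem_eq_inter, Finset.univ_inter, hTcard]
    have hsumr' : (∑ i, r' i) + t = ∑ i, r i := by
      rw [← hsumT, ← Finset.sum_add_distrib]
      apply Finset.sum_congr rfl
      intro i _
      by_cases hi : i ∈ T
      · have := hT1 i hi; simp [r', hi]; omega
      · simp [r', hi]
    have hsumc' : (∑ j, c' j) + t = ∑ j, c j := by
      rw [hc', Finset.sum_update_of_mem (mem_univ j₀)]
      rw [← Finset.add_sum_erase _ c (mem_univ j₀)]
      simp [Finset.sdiff_singleton_eq_erase]
      omega
    -- the invariant is preserved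
    have key : ∀ S : Finset (Fin n), j₀ ∉ S → ∑ j ∈ S, c j ≤ ∑ i, min (r' i) S.card := by
      intro S hS
      by_cases hcase : ∀ i ∈ T, S.card + 1 ≤ r i
      · have heq : ∀ i, min (r i) S.card = min (r' i) S.card := by
          intro i
          by_cases hi : i ∈ T
          · have := hcase i hi; simp only [r', if_pos hi]; omega
          · simp [r', hi]
        calc ∑ j ∈ S, c j ≤ ∑ i, min (r i) S.card := hcond S
          _ = ∑ i, min (r' i) S.card := Finset.sum_congr rfl fun i _ => heq i
      · push_neg at hcase
        obtain ⟨i₀, hi₀T, hi₀⟩ := hcase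
        have hi₀' : r i₀ ≤ S.card := by omega
        have houtT : ∀ i, i ∉ T → r i ≤ S.card := fun i hi =>
          le_trans (hTtop i₀ hi₀T i hi) hi₀'
        have h1 : c j₀ + ∑ j ∈ S, c j ≤ ∑ i, min (r i) (S.card + 1) := by
          have := hcond (insert j₀ S)
          rwa [Finset.card_insert_of_notMem hS, Finset.sum_insert hS] at this
        have h2 : ∑ i, min (r i) (S.card + 1)
            ≤ (∑ i, min (r' i) S.card) + t := by
          rw [← hsumT, ← Finset.sum_add_distrib]
          apply Finset.sum_le_sum
          intro i _
          by_cases hi : i ∈ T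
          · have := hT1 i hi
            simp only [r', if_pos hi]
            omega
          · have := houtT i hi
            simp only [r', if_neg hi]
            omega
        omega
    have hcond' : ∀ S : Finset (Fin n), ∑ j ∈ S, c' j ≤ ∑ i, min (r' i) S.card := by
      intro S
      have hkey := key (S.erase j₀) (Finset.notMem_erase _ _)
      have e1 : ∑ j ∈ S, c' j = ∑ j ∈ S.erase j₀, c j := by
        by_cases hj : j₀ ∈ S
        · rw [← Finset.add_sum_erase _ c' hj]
          have : c' j₀ = 0 := by simp [c']
          rw [this, zero_add]
          apply Finset.sum_congr rfl
          intro j hjS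
          have : j ≠ j₀ := Finset.ne_of_mem_erase hjS
          simp [c', Function.update_of_ne this]
        · rw [Finset.erase_eq_of_notMem hj]
          apply Finset.sum_congr rfl
          intro j hjS
          have : j ≠ j₀ := fun h => hj (h ▸ hjS)
          simp [c', Function.update_of_ne this]
      have e2 : ∑ i, min (r' i) (S.erase j₀).card ≤ ∑ i, min (r' i) S.card := by
        apply Finset.sum_le_sum
        intro i _
        have := Finset.card_erase_le (a := j₀) (s := S)
        omega
      rw [e1]; exact le_trans hkey e2
    -- apply induction hypothesis
    have hNt : N - t < N := by omega
    obtain ⟨M', hrow', hcol'⟩ := ih (N - t) hNt r' c' (by omega) (by omega) hcond'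
    -- column j₀ of M' is empty
    have hM'j₀ : ∀ i, M' i j₀ = false := by
      intro i
      have h := hcol' j₀
      have : c' j₀ = 0 := by simp [c']
      rw [this] at h
      have := Finset.sum_eq_zero_iff.mp h i (mem_univ i)
      by_contra hb
      simp [eq_true_of_ne_false hb] at this
    refine ⟨fun i j => if j = j₀ then (if i ∈ T then true else false) else M' i j, ?_, ?_⟩
    · intro i
      rw [← Finset.add_sum_erase _ _ (mem_univ j₀)]
      have e1 : ∑ j ∈ univ.erase j₀, (if (if j = j₀ then (if i ∈ T then true else false) else M' i j) then (1:ℕ) else 0)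
          = ∑ j ∈ univ.erase j₀, (if M' i j then (1:ℕ) else 0) := by
        apply Finset.sum_congr rfl
        intro j hj
        rw [if_neg (Finset.ne_of_mem_erase hj)]
      rw [e1]
      have e2 : ∑ j ∈ univ.erase j₀, (if M' i j then (1:ℕ) else 0) = r' i := by
        rw [← hrow' i, ← Finset.add_sum_erase _ _ (mem_univ j₀)]
        simp [hM'j₀ i]
      rw [e2]
      by_cases hi : i ∈ T
      · have := hT1 i hi; simp [hi, r']; omega
      · simp [hi, r']
    · intro j
      by_cases hj : j = j₀
      · have heq : ∀ x : Fin n, (if (if j = j₀ then (if x ∈ T then true else false) else M' x j) = true then (1:ℕ) else 0) = if x ∈ T then 1 else 0 := by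
          intro x
          rw [if_pos hj]
          by_cases hx : x ∈ T <;> simp [hx]
        rw [Finset.sum_congr rfl (fun x _ => heq x), hsumT, ht, hj]
      · simp only [if_neg hj]
        rw [hcol' j]
        simp [c', Function.update_of_ne hj]

lemma sum_Icc_one_eq_range (k : ℕ) (f : ℕ → ℕ) :
    ∑ i ∈ Finset.Icc 1 k, f i = ∑ i ∈ Finset.range k, f (i+1) := by
  induction k with
  | zero => simp
  | succ k ih => rw [Finset.sum_Icc_succ_top (by omega), ih, Finset.sum_range_succ]

/-- Top-k sums dominate sums over arbitrary k-subsets, for antitone weights. -/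
lemma top_sum_nat (n : ℕ) (g : ℕ → ℕ) (hg : ∀ a b : ℕ, a ≤ b → b < n → g b ≤ g a) :
    ∀ S : Finset ℕ, S ⊆ Finset.range n → ∑ j ∈ S, g j ≤ ∑ i ∈ Finset.range S.card, g i := by
  intro S
  induction S using Finset.induction_on_max with
  | empty => simp
  | insert a s ha ih =>
    intro hsub
    have han : a < n := Finset.mem_range.mp (hsub (mem_insert_self a s))
    have hanotmem : a ∉ s := fun h => lt_irrefl a (ha a h)
    have hssub : s ⊆ Finset.range n := fun x hx => hsub (mem_insert_of_mem hx)
    have hcard : s.card ≤ a := by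
      have : s ⊆ Finset.range a := fun x hx => Finset.mem_range.mpr (ha x hx)
      simpa using Finset.card_le_card this
    rw [Finset.sum_insert hanotmem, Finset.card_insert_of_notMem hanotmem,
      Finset.sum_range_succ]
    have h1 : g a ≤ g s.card := hg s.card a hcard han
    have h2 := ih hssub
    omega

/-- Reduction to strong indices. -/
lemma strong_reduction (n : ℕ) (d : ℕ → ℕ)
    (hdec : ∀ i j, 1 ≤ i → i ≤ j → j ≤ n → d j ≤ d i)
    (hstrong : ∀ k, 1 ≤ k → k ≤ n → k ≤ d k →
      ∑ i ∈ Finset.Icc 1 k, d i ≤ ∑ t ∈ Finset.Icc 1 n, min (d t) k) :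
    ∀ k, 1 ≤ k → k ≤ n → ∑ i ∈ Finset.Icc 1 k, d i ≤ ∑ t ∈ Finset.Icc 1 n, min (d t) k := by
  intro k hk1 hkn
  by_cases hks : k ≤ d k
  · exact hstrong k hk1 hkn hks
  · push_neg at hks
    -- p = largest j ≤ k with k < d j (0 if none)
    set p := Nat.findGreatest (fun j => k < d j) k with hp
    have hpk : p ≤ k := Nat.findGreatest_le k
    have hpspec : p ≠ 0 → k < d p := fun h0 => Nat.findGreatest_of_ne_zero (P := fun j => k < d j) hp.symm h0
    have hpklt : p < k := by
      rcases Nat.lt_or_ge p k with h | h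
      · exact h
      · exfalso
        have hpk' : p = k := le_antisymm hpk h
        have : k < d p := hpspec (by omega)
        rw [hpk'] at this
        omega
    -- facts about d
    have hbig : ∀ t, 1 ≤ t → t ≤ p → k < d t := by
      intro t h1 h2
      have hdp : k < d p := hpspec (by omega)
      have := hdec t p h1 h2 (by omega)
      omega
    have hsmall : ∀ t, p < t → t ≤ k → d t ≤ k := by
      intro t h1 h2
      rcases Nat.lt_or_ge k t with h | h
      · omega
      · have := Nat.findGreatest_is_greatest (P := fun j => k < d j) (n := k) h1 h2
        omega
    have htail : ∀ t, k < t → t ≤ n → d t ≤ k := by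
      intro t h1 h2
      have := hdec k t hk1 (by omega) h2
      omega
    -- convert to Ioc
    rw [show Finset.Icc 1 k = Finset.Ioc 0 k from Finset.Icc_add_one_left_eq_Ioc 0 k,
      show Finset.Icc 1 n = Finset.Ioc 0 n from Finset.Icc_add_one_left_eq_Ioc 0 n]
    -- step 1 : head sum bounded via strong index p (or trivially when p = 0)
    have step1 : ∑ i ∈ Finset.Ioc 0 p, d i ≤ ∑ t ∈ Finset.Ioc 0 n, min (d t) p := by
      rcases Nat.eq_zero_or_pos p with h0 | h0
      · simp [h0]
      · have hstr : p ≤ d p := by have := hpspec (by omega); omega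
        have := hstrong p h0 (by omega) hstr
        rwa [show Finset.Icc 1 p = Finset.Ioc 0 p from Finset.Icc_add_one_left_eq_Ioc 0 p,
          show Finset.Icc 1 n = Finset.Ioc 0 n from Finset.Icc_add_one_left_eq_Ioc 0 n] at this
    -- split sums
    have hsplitL : ∑ i ∈ Finset.Ioc 0 p, d i + ∑ i ∈ Finset.Ioc p k, d i
        = ∑ i ∈ Finset.Ioc 0 k, d i := Finset.sum_Ioc_consecutive _ (by omega) (by omega)
    have hsplitR1 : ∀ g : ℕ → ℕ, ∑ t ∈ Finset.Ioc 0 p, g t + ∑ t ∈ Finset.Ioc p k, g t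
        = ∑ t ∈ Finset.Ioc 0 k, g t := fun g => Finset.sum_Ioc_consecutive _ (by omega) (by omega)
    have hsplitR2 : ∀ g : ℕ → ℕ, ∑ t ∈ Finset.Ioc 0 k, g t + ∑ t ∈ Finset.Ioc k n, g t
        = ∑ t ∈ Finset.Ioc 0 n, g t := fun g => Finset.sum_Ioc_consecutive _ (by omega) (by omega)
    -- pieces
    have pieceA : ∑ t ∈ Finset.Ioc 0 p, min (d t) p = p * p := by
      rw [Finset.sum_congr rfl (fun t ht => by
        have := Finset.mem_Ioc.mp ht
        have := hbig t (by omega) (by omega)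
        show min (d t) p = p
        omega)]
      simp [Nat.card_Ioc, mul_comm]
    have pieceA' : ∑ t ∈ Finset.Ioc 0 p, min (d t) k = p * k := by
      rw [Finset.sum_congr rfl (fun t ht => by
        have := Finset.mem_Ioc.mp ht
        have := hbig t (by omega) (by omega)
        show min (d t) k = k
        omega)]
      simp [Nat.card_Ioc, mul_comm]
    have pieceB : ∑ t ∈ Finset.Ioc p k, min (d t) p ≤ (k - p) * p := by
      calc ∑ t ∈ Finset.Ioc p k, min (d t) p ≤ ∑ _t ∈ Finset.Ioc p k, p :=
            Finset.sum_le_sum (fun t _ => by omega)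
        _ = (k - p) * p := by simp [Nat.card_Ioc, mul_comm]
    have pieceC : ∑ t ∈ Finset.Ioc p k, min (d t) k = ∑ t ∈ Finset.Ioc p k, d t :=
      Finset.sum_congr rfl (fun t ht => by
        have := Finset.mem_Ioc.mp ht
        have := hsmall t (by omega) (by omega)
        omega)
    have pieceD : ∑ t ∈ Finset.Ioc k n, min (d t) p ≤ ∑ t ∈ Finset.Ioc k n, min (d t) k :=
      Finset.sum_le_sum (fun t _ => by omega)
    -- assemble
    have key : ∑ t ∈ Finset.Ioc 0 n, min (d t) p + ∑ i ∈ Finset.Ioc p k, d i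
        ≤ ∑ t ∈ Finset.Ioc 0 n, min (d t) k := by
      rw [← hsplitR2 (fun t => min (d t) p), ← hsplitR2 (fun t => min (d t) k),
        ← hsplitR1 (fun t => min (d t) p), ← hsplitR1 (fun t => min (d t) k),
        pieceA, pieceA', pieceC]
      have hmul : p * p + (k - p) * p = p * k := by
        have : p * p + (k - p) * p = (p + (k - p)) * p := by ring
        rw [this]
        rw [show p + (k - p) = k by omega]
        ring
      omega
    calc ∑ i ∈ Finset.Ioc 0 k, d i = ∑ i ∈ Finset.Ioc 0 p, d i + ∑ i ∈ Finset.Ioc p k, d i :=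
          hsplitL.symm
      _ ≤ ∑ t ∈ Finset.Ioc 0 n, min (d t) p + ∑ i ∈ Finset.Ioc p k, d i :=
          add_le_add_left step1 _
      _ ≤ ∑ t ∈ Finset.Ioc 0 n, min (d t) k := key

/-- The arithmetic identity rewriting the paper's inequality. -/
lemma ineq_iff (n k : ℕ) (d : ℕ → ℕ) (hpos : ∀ i, 1 ≤ i → i ≤ n → 0 < d i) (hk1 : 1 ≤ k)
    (hkn : k ≤ n) :
    (∑ i ∈ Finset.Icc 1 k,
        (d i + i * ((Finset.Icc 1 n).filter (fun t => d t = k - i)).card) ≤ k * n)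
      ↔ ∑ i ∈ Finset.Icc 1 k, d i ≤ ∑ t ∈ Finset.Icc 1 n, min (d t) k := by
  have h1 : ∑ i ∈ Finset.Icc 1 k, i * ((Finset.Icc 1 n).filter (fun t => d t = k - i)).card
      = ∑ t ∈ Finset.Icc 1 n, (k - min (d t) k) := by
    have e1 : ∀ i, i * ((Finset.Icc 1 n).filter (fun t => d t = k - i)).card
        = ∑ t ∈ Finset.Icc 1 n, (if d t = k - i then i else 0) := by
      intro i
      rw [Finset.card_filter, Finset.mul_sum]
      exact Finset.sum_congr rfl (fun t _ => by split <;> simp)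
    rw [Finset.sum_congr rfl (fun i _ => e1 i), Finset.sum_comm]
    apply Finset.sum_congr rfl
    intro t ht
    have htm := Finset.mem_Icc.mp ht
    have hdt : 1 ≤ d t := hpos t htm.1 htm.2
    rcases Nat.lt_or_ge (d t) k with hlt | hge
    · have e2 : ∑ i ∈ Finset.Icc 1 k, (if d t = k - i then i else 0)
          = ∑ i ∈ Finset.Icc 1 k, (if i = k - d t then i else 0) := by
        apply Finset.sum_congr rfl
        intro i hi
        have him := Finset.mem_Icc.mp hi
        by_cases h : d t = k - i
        · rw [if_pos h, if_pos (by omega)]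
        · rw [if_neg h, if_neg (by omega)]
      rw [e2, Finset.sum_ite_eq' (Finset.Icc 1 k) (k - d t) (fun x => x),
        if_pos (Finset.mem_Icc.mpr (by omega))]
      omega
    · rw [Finset.sum_eq_zero (fun i hi => by
        have him := Finset.mem_Icc.mp hi
        rw [if_neg (by omega)])]
      omega
  have h2 : ∑ t ∈ Finset.Icc 1 n, min (d t) k + ∑ t ∈ Finset.Icc 1 n, (k - min (d t) k)
      = k * n := by
    rw [← Finset.sum_add_distrib]
    rw [Finset.sum_congr rfl (fun t _ => by omega : ∀ t ∈ Finset.Icc 1 n,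
      min (d t) k + (k - min (d t) k) = k)]
    simp [Nat.card_Icc, mul_comm]
  rw [Finset.sum_add_distrib, h1]
  omega
lemma card_filter_lt (n k : ℕ) (hk : k ≤ n) :
    (Finset.filter (fun i : Fin n => (i:ℕ) < k) Finset.univ).card = k := by
  have h : Finset.filter (fun i : Fin n => (i:ℕ) < k) Finset.univ
      = (Finset.range k).attachFin (fun m hm => lt_of_lt_of_le (Finset.mem_range.mp hm) hk) := by
    ext i; simp [Finset.mem_attachFin]
  rw [h, Finset.card_attachFin, Finset.card_range]

theorem stmt_6 (n : ℕ) (hn : 0 < n) (d : ℕ → ℕ)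
    (hdec : ∀ i j, 1 ≤ i → i ≤ j → j ≤ n → d j ≤ d i)
    (hpos : ∀ i, 1 ≤ i → i ≤ n → 0 < d i) :
    BipartiteGraphic (fun i : Fin n => d ((i : ℕ) + 1)) ↔
      ∀ k, 1 ≤ k → k ≤ n → k ≤ d k →
        ∑ i ∈ Finset.Icc 1 k,
          (d i + i * ((Finset.Icc 1 n).filter (fun t => d t = k - i)).card) ≤ k * n := by
  constructor
  · rintro ⟨M, e, hrow, hcol⟩ k hk1 hkn _
    rw [ineq_iff n k d hpos hk1 hkn]
    set F := Finset.filter (fun i : Fin n => (i:ℕ) < k) Finset.univ with hF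
    have hFcard : F.card = k := card_filter_lt n k hkn
    have step1 : ∑ i ∈ Finset.Icc 1 k, d i = ∑ i ∈ F, d ((i:ℕ)+1) := by
      rw [sum_Icc_one_eq_range k (fun m => d m),
        ← sum_filter_lt_eq_range n k hn hkn (fun m => d (m+1))]
    have step2 : ∑ i ∈ F, d ((i:ℕ)+1) = ∑ j : Fin n, ∑ i ∈ F, (if M i j then (1:ℕ) else 0) := by
      rw [← Finset.sum_comm]
      exact Finset.sum_congr rfl (fun i _ => (hrow i).symm)
    have step3 : ∀ j : Fin n, ∑ i ∈ F, (if M i j then (1:ℕ) else 0)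
        ≤ min (d ((e j : ℕ)+1)) k := by
      intro j
      apply le_min
      · have hc2 : (∑ i : Fin n, if M i j then (1:ℕ) else 0) = d ((e j : ℕ)+1) := hcol j
        rw [← hc2]
        exact Finset.sum_le_sum_of_subset (Finset.subset_univ F)
      · calc ∑ i ∈ F, (if M i j then (1:ℕ) else 0) ≤ ∑ _i ∈ F, 1 :=
              Finset.sum_le_sum (fun i _ => by split <;> omega)
          _ = k := by rw [Finset.sum_const, smul_eq_mul, mul_one, hFcard]
    have step4 : ∑ j : Fin n, min (d ((e j : ℕ)+1)) k = ∑ j : Fin n, min (d ((j : ℕ)+1)) k :=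
      Equiv.sum_comp e (fun j => min (d ((j:ℕ)+1)) k)
    have step5 : ∑ j : Fin n, min (d ((j : ℕ)+1)) k = ∑ t ∈ Finset.Icc 1 n, min (d t) k := by
      rw [Fin.sum_univ_eq_sum_range (fun m => min (d (m+1)) k) n,
        ← sum_Icc_one_eq_range n (fun t => min (d t) k)]
    calc ∑ i ∈ Finset.Icc 1 k, d i = ∑ j : Fin n, ∑ i ∈ F, (if M i j then (1:ℕ) else 0) := by
          rw [step1, step2]
      _ ≤ ∑ j : Fin n, min (d ((e j : ℕ)+1)) k := Finset.sum_le_sum (fun j _ => step3 j)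
      _ = ∑ t ∈ Finset.Icc 1 n, min (d t) k := by rw [step4, step5]
  · intro h
    have hstrong : ∀ k, 1 ≤ k → k ≤ n → k ≤ d k →
        ∑ i ∈ Finset.Icc 1 k, d i ≤ ∑ t ∈ Finset.Icc 1 n, min (d t) k :=
      fun k h1 h2 h3 => (ineq_iff n k d hpos h1 h2).mp (h k h1 h2 h3)
    have hall := strong_reduction n d hdec hstrong
    have hcond : ∀ S : Finset (Fin n),
        ∑ j ∈ S, d ((j:ℕ)+1) ≤ ∑ i : Fin n, min (d ((i:ℕ)+1)) S.card := by
      intro S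
      have hkn : S.card ≤ n := by
        have := Finset.card_le_univ S
        simpa using this
      rcases Nat.eq_zero_or_pos S.card with h0 | h0
      · rw [Finset.card_eq_zero.mp h0]
        simp
      · have hinj : ∀ x ∈ S, ∀ y ∈ S, (x:ℕ) = (y:ℕ) → x = y := fun x _ y _ hxy => Fin.ext hxy
        have himg : ∑ j ∈ S.image (fun i : Fin n => (i:ℕ)), d (j+1)
            = ∑ j ∈ S, d ((j:ℕ)+1) := Finset.sum_image hinj
        have hcardimg : (S.image (fun i : Fin n => (i:ℕ))).card = S.card :=
          Finset.card_image_of_injective S Fin.val_injective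
        have hsub : S.image (fun i : Fin n => (i:ℕ)) ⊆ Finset.range n := by
          intro x hx
          obtain ⟨i, _, rfl⟩ := Finset.mem_image.mp hx
          exact Finset.mem_range.mpr i.isLt
        have htop := top_sum_nat n (fun m => d (m+1))
          (fun a b hab hbn => hdec (a+1) (b+1) (by omega) (by omega) (by omega))
          (S.image (fun i : Fin n => (i:ℕ))) hsub
        rw [hcardimg, himg] at htop
        have hICC := hall S.card h0 hkn
        calc ∑ j ∈ S, d ((j:ℕ)+1) ≤ ∑ i ∈ Finset.range S.card, d (i+1) := htop
          _ = ∑ i ∈ Finset.Icc 1 S.card, d i := (sum_Icc_one_eq_range S.card (fun m => d m)).symm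
          _ ≤ ∑ t ∈ Finset.Icc 1 n, min (d t) S.card := hICC
          _ = ∑ i ∈ Finset.range n, min (d (i+1)) S.card :=
              sum_Icc_one_eq_range n (fun t => min (d t) S.card)
          _ = ∑ i : Fin n, min (d ((i:ℕ)+1)) S.card :=
              (Fin.sum_univ_eq_sum_range (fun m => min (d (m+1)) S.card) n).symm
    obtain ⟨M, hrow, hcol⟩ := galeRyser n (∑ j : Fin n, d ((j:ℕ)+1))
      (fun i : Fin n => d ((i:ℕ)+1)) (fun i : Fin n => d ((i:ℕ)+1)) rfl rfl hcond
    exact ⟨M, Equiv.refl _, hrow, fun j => hcol j⟩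
end

section
/- Let d = (d₁,…,dₙ) be a decreasing sequence of positive integers with n ≥ d₁, let n_j = #{i : d_i = j}, and F_k as above. If k, p ∈ {0,…,n} satisfy p = max{q : d_q ≥ k+1} and k = max{q : d_q ≥ p+1}, then F_k = F_p. -/
open Finset

-- properties of p = sup of the filter
lemma sup_prop_a (n : ℕ) (d : ℕ → ℕ)
    (hdec : ∀ i j, 1 ≤ i → i ≤ j → j ≤ n → d j ≤ d i)
    (k p : ℕ)
    (hp : p = ((Finset.Icc 1 n).filter (fun q => k + 1 ≤ d q)).sup id) :
    ∀ t, 1 ≤ t → t ≤ p → k + 1 ≤ d t := by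
  intro t h1 h2
  rcases Finset.eq_empty_or_nonempty ((Finset.Icc 1 n).filter (fun q => k + 1 ≤ d q)) with he | hne
  · rw [he] at hp; simp at hp; omega
  · obtain ⟨b, hb, hsup⟩ := Finset.exists_mem_eq_sup _ hne id
    rw [hsup] at hp
    simp only [id_eq] at hp
    simp only [Finset.mem_filter, Finset.mem_Icc] at hb
    have : d b ≤ d t := hdec t b h1 (by omega) (by omega)
    omega

lemma sup_prop_b (n : ℕ) (d : ℕ → ℕ)
    (k p : ℕ)
    (hp : p = ((Finset.Icc 1 n).filter (fun q => k + 1 ≤ d q)).sup id) :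
    ∀ t, p < t → t ≤ n → d t ≤ k := by
  intro t h1 h2
  by_contra h
  have hmem : t ∈ (Finset.Icc 1 n).filter (fun q => k + 1 ≤ d q) := by
    simp only [Finset.mem_filter, Finset.mem_Icc]; omega
  have := Finset.le_sup (f := id) hmem
  simp only [id] at this
  omega

lemma aux_Fk (n : ℕ) (d : ℕ → ℕ)
    (hdec : ∀ i j, 1 ≤ i → i ≤ j → j ≤ n → d j ≤ d i)
    (k p : ℕ) (hpn : p ≤ n)
    (hp : p = ((Finset.Icc 1 n).filter (fun q => k + 1 ≤ d q)).sup id) :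
    ((k : ℤ) * n - ∑ i ∈ Finset.Icc 1 k, (d i : ℤ) -
        ∑ i ∈ Finset.range (k + 1),
          ((k : ℤ) - i) * ((Finset.Icc 1 n).filter (fun t => d t = i)).card) =
    (k : ℤ) * p + ∑ t ∈ Finset.Ioc p n, (d t : ℤ) - ∑ i ∈ Finset.Icc 1 k, (d i : ℤ) := by
  have ha := sup_prop_a n d hdec k p hp
  have hb := sup_prop_b n d k p hp
  have h1 : ∑ i ∈ Finset.range (k + 1),
      ((k : ℤ) - i) * ((Finset.Icc 1 n).filter (fun t => d t = i)).card =
      ∑ t ∈ Finset.Icc 1 n, ((k : ℤ) - min (d t) k) := by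
    have step : ∀ i ∈ Finset.range (k + 1),
        ((k : ℤ) - i) * ((Finset.Icc 1 n).filter (fun t => d t = i)).card =
        ∑ t ∈ Finset.Icc 1 n, (if d t = i then (k : ℤ) - i else 0) := by
      intro i _
      have : (((Finset.Icc 1 n).filter (fun t => d t = i)).card : ℤ) =
          ∑ t ∈ Finset.Icc 1 n, (if d t = i then (1 : ℤ) else 0) := by
        rw [Finset.card_filter]
        push_cast
        rfl
      rw [this, Finset.mul_sum]
      refine Finset.sum_congr rfl fun t _ => ?_
      rw [mul_ite, mul_one, mul_zero]
    rw [Finset.sum_congr rfl step, Finset.sum_comm]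
    refine Finset.sum_congr rfl fun t ht => ?_
    rw [Finset.sum_ite_eq]
    split_ifs with h
    · simp only [Finset.mem_range] at h
      have : min (d t) k = d t := min_eq_left (by omega)
      rw [this]
    · simp only [Finset.mem_range, not_lt] at h
      have : min (d t) k = k := min_eq_right (by omega)
      rw [this]; ring
  have h3 : ∑ t ∈ Finset.Icc 1 n, ((min (d t) k : ℕ) : ℤ) =
      (k : ℤ) * p + ∑ t ∈ Finset.Ioc p n, (d t : ℤ) := by
    have hIcc : Finset.Icc 1 n = Finset.Ioc 0 n := by
      rw [← Finset.Icc_add_one_left_eq_Ioc]; rfl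
    rw [hIcc, ← Finset.sum_Ioc_consecutive _ (Nat.zero_le p) hpn]
    congr 1
    · have : ∀ t ∈ Finset.Ioc 0 p, ((min (d t) k : ℕ) : ℤ) = (k : ℤ) := by
        intro t ht
        simp only [Finset.mem_Ioc] at ht
        have := ha t (by omega) ht.2
        have h' : min (d t) k = k := min_eq_right (by omega)
        rw [h']
      rw [Finset.sum_congr rfl this, Finset.sum_const, Nat.card_Ioc]
      simp [mul_comm]
    · refine Finset.sum_congr rfl fun t ht => ?_
      simp only [Finset.mem_Ioc] at ht
      have := hb t ht.1 ht.2
      have h' : min (d t) k = d t := min_eq_left (by omega)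
      rw [h']
  have h4 : ∑ t ∈ Finset.Icc 1 n, ((k : ℤ) - min (d t) k) =
      (k : ℤ) * n - ((k : ℤ) * p + ∑ t ∈ Finset.Ioc p n, (d t : ℤ)) := by
    rw [Finset.sum_sub_distrib, h3, Finset.sum_const, Nat.card_Icc]
    simp only [nsmul_eq_mul]
    push_cast
    ring
  rw [h1, h4]
  ring

lemma main_le (n : ℕ) (d : ℕ → ℕ)
    (hdec : ∀ i j, 1 ≤ i → i ≤ j → j ≤ n → d j ≤ d i)
    (k p : ℕ) (hk : k ≤ n) (hpn : p ≤ n) (hple : p ≤ k)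
    (hp : p = ((Finset.Icc 1 n).filter (fun q => k + 1 ≤ d q)).sup id)
    (hkp : k = ((Finset.Icc 1 n).filter (fun q => p + 1 ≤ d q)).sup id) :
    ((k : ℤ) * n - ∑ i ∈ Finset.Icc 1 k, (d i : ℤ) -
        ∑ i ∈ Finset.range (k + 1),
          ((k : ℤ) - i) * ((Finset.Icc 1 n).filter (fun t => d t = i)).card) =
    ((p : ℤ) * n - ∑ i ∈ Finset.Icc 1 p, (d i : ℤ) -
        ∑ i ∈ Finset.range (p + 1),
          ((p : ℤ) - i) * ((Finset.Icc 1 n).filter (fun t => d t = i)).card) := by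
  rw [aux_Fk n d hdec k p hpn hp, aux_Fk n d hdec p k hk hkp]
  have e1 : ∑ t ∈ Finset.Ioc p n, (d t : ℤ) =
      ∑ t ∈ Finset.Ioc p k, (d t : ℤ) + ∑ t ∈ Finset.Ioc k n, (d t : ℤ) := by
    rw [Finset.sum_Ioc_consecutive _ hple hk]
  have e2 : ∑ i ∈ Finset.Icc 1 k, (d i : ℤ) =
      ∑ i ∈ Finset.Icc 1 p, (d i : ℤ) + ∑ t ∈ Finset.Ioc p k, (d t : ℤ) := by
    have h1 : Finset.Icc 1 k = Finset.Ioc 0 k := by rw [← Finset.Icc_add_one_left_eq_Ioc]; rfl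
    have h2 : Finset.Icc 1 p = Finset.Ioc 0 p := by rw [← Finset.Icc_add_one_left_eq_Ioc]; rfl
    rw [h1, h2, Finset.sum_Ioc_consecutive _ (Nat.zero_le p) hple]
  rw [e1, e2]
  ring

theorem stmt_10 (n : ℕ) (hn : 0 < n) (d : ℕ → ℕ)
    (hdec : ∀ i j, 1 ≤ i → i ≤ j → j ≤ n → d j ≤ d i)
    (hpos : ∀ i, 1 ≤ i → i ≤ n → 0 < d i)
    (hd1 : d 1 ≤ n)
    (k p : ℕ) (hk : k ≤ n) (hpn : p ≤ n)
    (hp : p = ((Finset.Icc 1 n).filter (fun q => k + 1 ≤ d q)).sup id)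
    (hkp : k = ((Finset.Icc 1 n).filter (fun q => p + 1 ≤ d q)).sup id) :
    ((k : ℤ) * n - ∑ i ∈ Finset.Icc 1 k, (d i : ℤ) -
        ∑ i ∈ Finset.range (k + 1),
          ((k : ℤ) - i) * ((Finset.Icc 1 n).filter (fun t => d t = i)).card) =
    ((p : ℤ) * n - ∑ i ∈ Finset.Icc 1 p, (d i : ℤ) -
        ∑ i ∈ Finset.range (p + 1),
          ((p : ℤ) - i) * ((Finset.Icc 1 n).filter (fun t => d t = i)).card) := by
  rcases le_total p k with h | h
  · exact main_le n d hdec k p hk hpn h hp hkp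
  · exact (main_le n d hdec p k hpn hk h hkp hp).symm
end

section
/- Let d = (d₁,…,dₙ) be a decreasing sequence of positive integers with maximum element a = d₁ ≤ n and minimum element b = dₙ, and let K = max{k : d_k ≥ k} be the largest strong index. Then for every strong index k with k > b, Σ_{i=1}^{k}(d_i + i·n_{k−i}) ≤ n(k−b) + K(a+b) − K², where n_j = #{i : d_i = j}. -/
theorem stmt_13 (n : ℕ) (hn : 0 < n) (d : ℕ → ℕ)
    (hdec : ∀ i j, 1 ≤ i → i ≤ j → j ≤ n → d j ≤ d i)
    (hpos : ∀ i, 1 ≤ i → i ≤ n → 0 < d i)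
    (a b K : ℕ) (ha : a = d 1) (han : a ≤ n) (hb : b = d n)
    (hK : K = ((Finset.Icc 1 n).filter (fun q => q ≤ d q)).sup id)
    (k : ℕ) (hk1 : 1 ≤ k) (hkn : k ≤ n) (hstrong : k ≤ d k) (hkb : b < k) :
    (∑ i ∈ Finset.Icc 1 k,
        ((d i : ℤ) + i * ((Finset.Icc 1 n).filter (fun t => d t = k - i)).card)) ≤
      (n : ℤ) * ((k : ℤ) - b) + (K : ℤ) * ((a : ℤ) + b) - (K : ℤ) ^ 2 := by
  set s := (Finset.Icc 1 n).filter (fun q => q ≤ d q) with hs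
  have hkmem : k ∈ s := by
    simp only [hs, Finset.mem_filter, Finset.mem_Icc]
    exact ⟨⟨hk1, hkn⟩, hstrong⟩
  obtain ⟨m, hm, hmeq⟩ := Finset.exists_mem_eq_sup s ⟨k, hkmem⟩ id
  have hKmem : K ∈ s := by rw [hK, hmeq]; exact hm
  have hKfacts : 1 ≤ K ∧ K ≤ n ∧ K ≤ d K := by
    have := hKmem
    simp only [hs, Finset.mem_filter, Finset.mem_Icc] at this
    exact ⟨this.1.1, this.1.2, this.2⟩
  have hkK : k ≤ K := by
    have := Finset.le_sup (f := id) hkmem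
    rwa [← hK] at this
  have hKa : K ≤ a := by
    rw [ha]
    exact le_trans hKfacts.2.2 (hdec 1 K le_rfl hKfacts.1 hKfacts.2.1)
  -- bound on Σ d i
  have h1 : ∑ i ∈ Finset.Icc 1 k, d i ≤ k * a := by
    calc ∑ i ∈ Finset.Icc 1 k, d i ≤ ∑ _i ∈ Finset.Icc 1 k, a := by
          apply Finset.sum_le_sum
          intro i hi
          rw [Finset.mem_Icc] at hi
          rw [ha]
          exact hdec 1 i le_rfl hi.1 (le_trans hi.2 hkn)
      _ = k * a := by rw [Finset.sum_const, Nat.card_Icc]; simp [Nat.mul_comm]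
  -- the level sets
  set A : ℕ → Finset ℕ := fun i => (Finset.Icc 1 n).filter (fun t => d t = k - i) with hA
  have h2 : ∀ i ∈ Finset.Icc 1 k, i * (A i).card ≤ (k - b) * (A i).card := by
    intro i hi
    rw [Finset.mem_Icc] at hi
    rcases Nat.eq_zero_or_pos (A i).card with h | h
    · simp [h]
    · obtain ⟨t, ht⟩ := Finset.card_pos.mp h
      simp only [hA, Finset.mem_filter, Finset.mem_Icc] at ht
      have hbt : b ≤ d t := by rw [hb]; exact hdec t n ht.1.1 ht.1.2 le_rfl
      have : i ≤ k - b := by omega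
      exact Nat.mul_le_mul_right _ this
  -- disjointness and subset
  have hdisj : (((Finset.Icc 1 k : Finset ℕ) : Set ℕ)).PairwiseDisjoint A := by
    intro i hi j hj hij
    simp only [Finset.mem_coe, Finset.mem_Icc] at hi hj
    refine Finset.disjoint_left.mpr ?_
    intro t hti htj
    simp only [hA, Finset.mem_filter] at hti htj
    exact hij (by omega)
  have hsub : (Finset.Icc 1 k).biUnion A ⊆ Finset.Icc (K + 1) n := by
    intro t ht
    rw [Finset.mem_biUnion] at ht
    obtain ⟨i, hi, hti⟩ := ht
    rw [Finset.mem_Icc] at hi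
    simp only [hA, Finset.mem_filter, Finset.mem_Icc] at hti
    rw [Finset.mem_Icc]
    refine ⟨?_, hti.1.2⟩
    by_contra hcon
    have htK : t ≤ K := by omega
    have : k ≤ d t := le_trans (le_trans hkK hKfacts.2.2)
      (hdec t K hti.1.1 htK hKfacts.2.1)
    omega
  have h3 : ∑ i ∈ Finset.Icc 1 k, (A i).card ≤ n - K := by
    rw [← Finset.card_biUnion hdisj]
    calc ((Finset.Icc 1 k).biUnion A).card ≤ (Finset.Icc (K + 1) n).card :=
          Finset.card_le_card hsub
      _ = n - K := by rw [Nat.card_Icc]; omega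
  have h4 : ∑ i ∈ Finset.Icc 1 k, i * (A i).card ≤ (k - b) * (n - K) := by
    calc ∑ i ∈ Finset.Icc 1 k, i * (A i).card
        ≤ ∑ i ∈ Finset.Icc 1 k, (k - b) * (A i).card := Finset.sum_le_sum h2
      _ = (k - b) * ∑ i ∈ Finset.Icc 1 k, (A i).card := by rw [Finset.mul_sum]
      _ ≤ (k - b) * (n - K) := Nat.mul_le_mul_left _ h3
  -- combine in ℤ
  rw [Finset.sum_add_distrib]
  have h1' : (∑ i ∈ Finset.Icc 1 k, (d i : ℤ)) ≤ (k : ℤ) * a := by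
    exact_mod_cast h1
  have h4' : (∑ i ∈ Finset.Icc 1 k, (i : ℤ) * ((A i).card : ℤ))
      ≤ ((k : ℤ) - b) * ((n : ℤ) - K) := by
    have := h4
    have hcast : (((k - b) * (n - K) : ℕ) : ℤ) = ((k : ℤ) - b) * ((n : ℤ) - K) := by
      push_cast [Nat.cast_sub (le_of_lt hkb), Nat.cast_sub hKfacts.2.1]
      ring
    calc (∑ i ∈ Finset.Icc 1 k, (i : ℤ) * ((A i).card : ℤ))
        = ((∑ i ∈ Finset.Icc 1 k, i * (A i).card : ℕ) : ℤ) := by push_cast; ring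
      _ ≤ (((k - b) * (n - K) : ℕ) : ℤ) := by exact_mod_cast h4
      _ = ((k : ℤ) - b) * ((n : ℤ) - K) := hcast
  have hkK' : (k : ℤ) ≤ K := by exact_mod_cast hkK
  have hKa' : (K : ℤ) ≤ a := by exact_mod_cast hKa
  have hKn' : (K : ℤ) ≤ n := by exact_mod_cast hKfacts.2.1
  have hbk' : (b : ℤ) ≤ k := by exact_mod_cast le_of_lt hkb
  nlinarith [mul_nonneg (sub_nonneg.mpr hkK') (sub_nonneg.mpr (le_trans hkK' hKa')),
    mul_nonneg (sub_nonneg.mpr hKa') (sub_nonneg.mpr hkK'),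
    h1', h4']
end

section
/- The following two conditions on positive integers a, b, n with b ≤ a are equivalent: (i) nb ≥ (a+b)²/4; (ii) there exists a real number x ≥ 1 with a ≤ xb and a ≤ 4xn/(x+1)². -/
theorem stmt_17 (a b n : ℕ) (ha : 0 < a) (hb : 0 < b) (hn : 0 < n) (hba : b ≤ a) :
    4 * n * b ≥ (a + b) ^ 2 ↔
      ∃ x : ℝ, 1 ≤ x ∧ (a : ℝ) ≤ x * b ∧ (a : ℝ) ≤ 4 * x * n / (x + 1) ^ 2 := by
  have hb' : (0:ℝ) < b := by exact_mod_cast hb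
  have ha' : (0:ℝ) < a := by exact_mod_cast ha
  have hba' : (b:ℝ) ≤ a := by exact_mod_cast hba
  constructor
  · intro h
    have h' : ((a:ℝ)+b)^2 ≤ 4*n*b := by exact_mod_cast h
    refine ⟨(a:ℝ)/b, ?_, ?_, ?_⟩
    · rw [le_div_iff₀ hb']; simpa using hba'
    · rw [div_mul_cancel₀ _ (ne_of_gt hb')]
    · rw [le_div_iff₀ (by positivity)]
      have heq : (a:ℝ)/b + 1 = (a+b)/b := by field_simp
      rw [heq, div_pow]
      have e1 : (a:ℝ) * ((a+b)^2/b^2) = (a*(a+b)^2)/b^2 := by ring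
      have e2 : 4*((a:ℝ)/b)*n = (4*a*n)/b := by ring
      rw [e1, e2, div_le_div_iff₀ (by positivity) hb']
      nlinarith [mul_le_mul_of_nonneg_left h' (mul_pos ha' hb').le]
  · rintro ⟨x, hx1, hx2, hx3⟩
    have hx0 : (0:ℝ) < x := lt_of_lt_of_le one_pos hx1
    rw [le_div_iff₀ (by positivity)] at hx3
    have h1 : (0:ℝ) ≤ a*x - b := by nlinarith
    have h2 : (0:ℝ) ≤ b*x - a := by nlinarith
    have key : ((a:ℝ)+b)^2 * x ≤ 4*n*b*x := by nlinarith [mul_nonneg h1 h2]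
    have : ((a:ℝ)+b)^2 ≤ 4*n*b := le_of_mul_le_mul_right (by linarith) hx0
    exact_mod_cast this
end
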